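/- arXiv:1807.05417 — 4 statements merged into one kernel-verified Lean document; each statement's English description precedes it below -/
import Mathlib

section
/- Let (X,d,m) be a metric measure space, p ∈ [1,∞), and let D be a D-structure on (X,d,m). Then the Sobolev space W^{1,p}(X,d,m,D) is a Banach space when endowed with the norm ‖u‖_{W^{1,p}} := (‖u‖_{L^p(m)}^p + E_p(u))^{1/p}. -/
open Filter Set
open scoped ENNReal NNReal Topology

noncomputable section

namespace AxSob

variable {X : Type*} [MetricSpace X] [MeasurableSpace X]

/-- The quantity `∫_B |u|^p dm`. -/
def lpIntOn (m : MeasureTheory.Measure X) (p : ℝ) (u : X → ℝ) (B : Set X) : ℝ≥0∞ :=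
  ∫⁻ x in B, ENNReal.ofReal |u x| ^ p ∂m

/-- `u` belongs to `L^p(m)`. -/
def LpMem (m : MeasureTheory.Measure X) (p : ℝ) (u : X → ℝ) : Prop :=
  Measurable u ∧ lpIntOn m p u Set.univ < ∞

/-- `u` belongs to `L^p_loc(m)`: it is Borel and `p`-integrable on every bounded Borel set. -/
def LpLocMem (m : MeasureTheory.Measure X) (p : ℝ) (u : X → ℝ) : Prop :=
  Measurable u ∧ ∀ B : Set X, MeasurableSet B → Bornology.IsBounded B → lpIntOn m p u B < ∞

/-- Convergence in `L^p(m)`. -/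
def LpTendsto (m : MeasureTheory.Measure X) (p : ℝ) (g : ℕ → X → ℝ) (g₀ : X → ℝ) : Prop :=
  Tendsto (fun n => lpIntOn m p (fun x => g n x - g₀ x) Set.univ) atTop (𝓝 0)

/-- Convergence in `L^p_loc(m)`. -/
def LpLocTendsto (m : MeasureTheory.Measure X) (p : ℝ) (u : ℕ → X → ℝ) (u₀ : X → ℝ) : Prop :=
  ∀ B : Set X, MeasurableSet B → Bornology.IsBounded B →
    Tendsto (fun n => lpIntOn m p (fun x => u n x - u₀ x) B) atTop (𝓝 0)

/-- `u` belongs to `L^∞(m)`. -/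
def LinfMem (m : MeasureTheory.Measure X) (u : X → ℝ) : Prop :=
  Measurable u ∧ ∃ C : ℝ, ∀ᵐ x ∂m, |u x| ≤ C

/-- A `D`-structure (à la Gol'dshtein–Troyanov) on a metric measure space `(X, d, m)`,
with exponent `p`.  To every function `u` (thought of as an element of `L^p_loc(m)`) it
associates the family `D u` of its pseudo-gradients: non-negative Borel functions,
considered up to `m`-a.e. equality, satisfying the axioms A1–A5. -/
structure DStructure (X : Type*) [MetricSpace X] [MeasurableSpace X]
    (m : MeasureTheory.Measure X) (p : ℝ) where
  D : (X → ℝ) → Set (X → ℝ)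
  measurable_of_mem : ∀ u g, g ∈ D u → Measurable g
  nonneg_of_mem : ∀ u g, g ∈ D u → 0 ≤ g
  /-- `D` is defined on `L^p_loc(m)`, i.e. on `m`-a.e. equivalence classes. -/
  congr_ae : ∀ u v : X → ℝ, u =ᵐ[m] v → D u = D v
  /-- pseudo-gradients are considered up to `m`-a.e. equality. -/
  mem_congr_ae : ∀ u g h : X → ℝ, g ∈ D u → g =ᵐ[m] h → Measurable h → 0 ≤ h → h ∈ D u
  /-- A1 (non triviality). -/
  axiomA1 : ∀ (u : X → ℝ) (K : ℝ≥0), LpLocMem m p u → 0 ≤ u → LipschitzWith K u →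
    {x | 0 < u x}.indicator (fun _ => (K : ℝ)) ∈ D u
  /-- A2 (upper linearity). -/
  axiomA2 : ∀ (u₁ u₂ g₁ g₂ g : X → ℝ) (α₁ α₂ : ℝ),
    LpLocMem m p u₁ → LpLocMem m p u₂ → g₁ ∈ D u₁ → g₂ ∈ D u₂ →
    Measurable g → 0 ≤ g → (∀ᵐ x ∂m, |α₁| * g₁ x + |α₂| * g₂ x ≤ g x) →
    g ∈ D (fun x => α₁ * u₁ x + α₂ * u₂ x)
  /-- A3 (Leibniz rule). -/
  axiomA3 : ∀ (u g φ : X → ℝ) (K : ℝ≥0) (M : ℝ),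
    LpLocMem m p u → g ∈ D u → LipschitzWith K φ → (∀ x, |φ x| ≤ M) →
    (fun x => g x * M + (K : ℝ) * |u x|) ∈ D (fun x => φ x * u x)
  /-- A4 (lattice property). -/
  axiomA4 : ∀ u₁ u₂ g₁ g₂ : X → ℝ,
    LpLocMem m p u₁ → LpLocMem m p u₂ → g₁ ∈ D u₁ → g₂ ∈ D u₂ →
    (fun x => max (g₁ x) (g₂ x)) ∈ D (fun x => max (u₁ x) (u₂ x)) ∧
    (fun x => max (g₁ x) (g₂ x)) ∈ D (fun x => min (u₁ x) (u₂ x))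
  /-- A5 (completeness). -/
  axiomA5 : ∀ (u g : ℕ → X → ℝ) (u₀ g₀ : X → ℝ),
    (∀ n, LpLocMem m p (u n)) → (∀ n, g n ∈ D (u n)) → (∀ n, LpMem m p (g n)) →
    LpLocMem m p u₀ → Measurable g₀ → 0 ≤ g₀ →
    LpLocTendsto m p u u₀ → LpTendsto m p g g₀ → g₀ ∈ D u₀

namespace DStructure

variable {m : MeasureTheory.Measure X} {p : ℝ}

/-- The `p`-Dirichlet energy `E_p(u|B) = inf { ∫_B g^p dm : g ∈ D[u] }`. -/
def energyOn (S : DStructure X m p) (u : X → ℝ) (B : Set X) : ℝ≥0∞ :=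
  ⨅ (g : X → ℝ) (_ : g ∈ S.D u), lpIntOn m p g B

/-- The `p`-Dirichlet energy `E_p(u) = E_p(u|X)`. -/
def energy (S : DStructure X m p) (u : X → ℝ) : ℝ≥0∞ := S.energyOn u Set.univ

/-- The Sobolev class `S^p(X) = { u ∈ L^p_loc(m) : E_p(u) < ∞ }`. -/
def SobolevClass (S : DStructure X m p) : Set (X → ℝ) :=
  {u | LpLocMem m p u ∧ S.energy u < ∞}

/-- The Sobolev space `W^{1,p}(X) = L^p(m) ∩ S^p(X)`. -/
def W1p (S : DStructure X m p) : Set (X → ℝ) :=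
  {u | LpMem m p u ∧ S.energy u < ∞}

/-- The Sobolev norm `‖u‖ = (‖u‖_{L^p}^p + E_p(u))^{1/p}`. -/
def wNorm (S : DStructure X m p) (u : X → ℝ) : ℝ≥0∞ :=
  (lpIntOn m p u Set.univ + S.energy u) ^ (1 / p)

/-- `g` is the minimal pseudo-gradient of `u`: `g ∈ D[u] ∩ L^p(m)` and
`∫ g^p dm = E_p(u)`. -/
def IsMinimalPG (S : DStructure X m p) (u g : X → ℝ) : Prop :=
  g ∈ S.D u ∧ LpMem m p g ∧ lpIntOn m p g Set.univ = S.energy u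

/-- Property L1: if `u ∈ S^p(X)` is `m`-a.e. constant on a Borel set `B`, then
`E_p(u|B) = 0`. -/
def L1prop (S : DStructure X m p) : Prop :=
  ∀ u ∈ S.SobolevClass, ∀ B : Set X, MeasurableSet B →
    (∃ c : ℝ, ∀ᵐ x ∂(m.restrict B), u x = c) → S.energyOn u B = 0

/-- Property L2: if `u ∈ S^p(X)` is `m`-a.e. constant on a Borel set `B`, then the
minimal pseudo-gradient vanishes `m`-a.e. on `B`. -/
def L2prop (S : DStructure X m p) : Prop :=
  ∀ u ∈ S.SobolevClass, ∀ B : Set X, MeasurableSet B →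
    (∃ c : ℝ, ∀ᵐ x ∂(m.restrict B), u x = c) →
    ∀ g, S.IsMinimalPG u g → ∀ᵐ x ∂(m.restrict B), g x = 0

/-- Property L3: if `u ∈ S^p(X)` and `g ∈ D[u]`, then `χ_{u>0}·g ∈ D[u⁺]`. -/
def L3prop (S : DStructure X m p) : Prop :=
  ∀ u ∈ S.SobolevClass, ∀ g ∈ S.D u,
    {x | 0 < u x}.indicator g ∈ S.D (fun x => max (u x) 0)

/-- Property L4: if `u ∈ S^p(X)` and `g₁, g₂ ∈ D[u]`, then `min{g₁,g₂} ∈ D[u]`. -/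
def L4prop (S : DStructure X m p) : Prop :=
  ∀ u ∈ S.SobolevClass, ∀ g₁ ∈ S.D u, ∀ g₂ ∈ S.D u,
    (fun x => min (g₁ x) (g₂ x)) ∈ S.D u

/-- Property L5: the minimal pseudo-gradient satisfies `Du ≤ g` `m`-a.e. for every
`g ∈ D[u]`. -/
def L5prop (S : DStructure X m p) : Prop :=
  ∀ u ∈ S.SobolevClass, ∀ g, S.IsMinimalPG u g →
    ∀ h ∈ S.D u, ∀ᵐ x ∂m, g x ≤ h x

/-- A pointwise local `D`-structure: it satisfies L1 and L5. -/
def PointwiseLocal (S : DStructure X m p) : Prop := S.L1prop ∧ S.L5prop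

/-- Strong locality in the sense of Shanmugalingam. -/
def ShanmugalingamLocal (S : DStructure X m p) : Prop :=
  ∀ u₁ ∈ S.SobolevClass, ∀ u₂ ∈ S.SobolevClass, ∀ B : Set X, MeasurableSet B →
    (∀ᵐ x ∂(m.restrict B), u₁ x = u₂ x) →
    ∀ g₁ ∈ S.D u₁, ∀ g₂ ∈ S.D u₂,
      (fun x => B.indicator g₁ x + Bᶜ.indicator g₂ x) ∈ S.D u₂

/-- Strong locality in the sense of Timoshin. -/
def TimoshinLocal (S : DStructure X m p) : Prop :=
  ∀ u₁ ∈ S.SobolevClass, ∀ u₂ ∈ S.SobolevClass,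
    ∀ g₁ ∈ S.D u₁, ∀ g₂ ∈ S.D u₂,
      (fun x => {y | u₁ y < u₂ y}.indicator g₁ x + {y | u₂ y < u₁ y}.indicator g₂ x +
        {y | u₁ y = u₂ y}.indicator (fun y => min (g₁ y) (g₂ y)) x)
        ∈ S.D (fun x => min (u₁ x) (u₂ x))

end DStructure

end AxSob

namespace SobAux

open MeasureTheory AxSob AxSob.DStructure Set Filter
open scoped ENNReal NNReal Topology
set_option linter.unusedSectionVars false
set_option linter.unusedVariables false

variable {X : Type*} [MetricSpace X] [MeasurableSpace X] {m : MeasureTheory.Measure X} {p : ℝ}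

lemma hp0 (hp : 1 ≤ p) : 0 < p := lt_of_lt_of_le one_pos hp
lemma hip (hp : 1 ≤ p) : 0 < 1/p := by positivity
lemma hip1 (hp : 1 ≤ p) : 1/p ≤ 1 := by rw [div_le_one (hp0 hp)]; exact hp

lemma rpow_inv_rpow (hp : 1 ≤ p) (a : ℝ≥0∞) : (a ^ (1/p)) ^ p = a := by
  rw [← ENNReal.rpow_mul, one_div, inv_mul_cancel₀ (hp0 hp).ne', ENNReal.rpow_one]

lemma rpow_rpow_inv (hp : 1 ≤ p) (a : ℝ≥0∞) : (a ^ p) ^ (1/p) = a := by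
  rw [← ENNReal.rpow_mul, one_div, mul_inv_cancel₀ (hp0 hp).ne', ENNReal.rpow_one]

lemma rpow_le_rpow_inv_iff (hp : 1 ≤ p) {a c : ℝ≥0∞} : a ^ (1/p) ≤ c ↔ a ≤ c ^ p := by
  constructor
  · intro h
    have := ENNReal.rpow_le_rpow h (hp0 hp).le
    rwa [rpow_inv_rpow hp] at this
  · intro h
    have := ENNReal.rpow_le_rpow h (hip hp).le
    rwa [rpow_rpow_inv hp] at this

lemma lpIntOn_univ (u : X → ℝ) :
    lpIntOn m p u Set.univ = ∫⁻ x, ENNReal.ofReal |u x| ^ p ∂m := by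
  rw [lpIntOn, MeasureTheory.Measure.restrict_univ]

lemma lpIntOn_congr {u v : X → ℝ} (B : Set X) (h : ∀ x, |u x| = |v x|) :
    lpIntOn m p u B = lpIntOn m p v B := by
  unfold lpIntOn; simp only [h]

lemma meas_ofReal_abs {u : X → ℝ} (hu : Measurable u) :
    Measurable fun x => ENNReal.ofReal |u x| :=
  ENNReal.measurable_ofReal.comp hu.abs

lemma lpIntOn_mono_univ (u : X → ℝ) (B : Set X) :
    lpIntOn m p u B ≤ lpIntOn m p u Set.univ :=
  lintegral_mono_set (Set.subset_univ B)

lemma minkowski (hp : 1 ≤ p) {u v : X → ℝ} (hu : Measurable u) (hv : Measurable v) (B : Set X) :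
    lpIntOn m p (fun x => u x + v x) B ^ (1/p) ≤
      lpIntOn m p u B ^ (1/p) + lpIntOn m p v B ^ (1/p) := by
  have h1 : lpIntOn m p (fun x => u x + v x) B ≤
      ∫⁻ x in B, ((fun x => ENNReal.ofReal |u x|) + fun x => ENNReal.ofReal |v x|) x ^ p ∂m := by
    refine lintegral_mono fun x => ?_
    have h2 : ENNReal.ofReal |u x + v x| ≤ ENNReal.ofReal |u x| + ENNReal.ofReal |v x| := by
      rw [← ENNReal.ofReal_add (abs_nonneg _) (abs_nonneg _)]
      exact ENNReal.ofReal_le_ofReal (abs_add_le _ _)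
    exact ENNReal.rpow_le_rpow h2 (hp0 hp).le
  refine le_trans (ENNReal.rpow_le_rpow h1 (hip hp).le) ?_
  exact ENNReal.lintegral_Lp_add_le (meas_ofReal_abs hu).aemeasurable
    (meas_ofReal_abs hv).aemeasurable hp

lemma lpIntOn_neg (u : X → ℝ) (B : Set X) :
    lpIntOn m p (fun x => -(u x)) B = lpIntOn m p u B :=
  lpIntOn_congr B fun x => abs_neg _

lemma minkowski_sub (hp : 1 ≤ p) {u v : X → ℝ} (hu : Measurable u) (hv : Measurable v) (B : Set X) :
    lpIntOn m p (fun x => u x - v x) B ^ (1/p) ≤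
      lpIntOn m p u B ^ (1/p) + lpIntOn m p v B ^ (1/p) := by
  have h := minkowski (m := m) (v := fun x => -(v x)) hp hu hv.neg B
  rwa [show lpIntOn m p (fun x => u x + -v x) B = lpIntOn m p (fun x => u x - v x) B from
    lpIntOn_congr B fun x => by rw [← sub_eq_add_neg], lpIntOn_neg (m := m)] at h

lemma minkowski_three (hp : 1 ≤ p) {u v w : X → ℝ} (hu : Measurable u) (hv : Measurable v)
    (hw : Measurable w) (B : Set X) :
    lpIntOn m p (fun x => u x - w x) B ^ (1/p) ≤
      lpIntOn m p (fun x => u x - v x) B ^ (1/p) + lpIntOn m p (fun x => v x - w x) B ^ (1/p) := by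
  have h := minkowski (m := m) (u := fun x => u x - v x) (v := fun x => v x - w x) hp (hu.sub hv) (hv.sub hw) B
  rwa [show lpIntOn m p (fun x => (u x - v x) + (v x - w x)) B
      = lpIntOn m p (fun x => u x - w x) B from lpIntOn_congr B fun x => by ring_nf] at h

lemma lpIntOn_const_mul (hp : 1 ≤ p) (c : ℝ) (u : X → ℝ) (B : Set X) :
    lpIntOn m p (fun x => c * u x) B = ENNReal.ofReal |c| ^ p * lpIntOn m p u B := by
  unfold lpIntOn
  rw [← lintegral_const_mul' _ _ (ENNReal.rpow_ne_top_of_nonneg (hp0 hp).le ENNReal.ofReal_ne_top)]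
  congr 1; funext x
  rw [abs_mul, ENNReal.ofReal_mul (abs_nonneg c), ENNReal.mul_rpow_of_nonneg _ _ (hp0 hp).le]

lemma lint_sum_rpow_le (hp : 1 ≤ p) {f : ℕ → X → ℝ≥0∞} (hf : ∀ n, Measurable (f n)) (N : ℕ) :
    (∫⁻ x, (∑ k ∈ Finset.range N, f k x) ^ p ∂m) ^ (1/p) ≤
      ∑ k ∈ Finset.range N, (∫⁻ x, f k x ^ p ∂m) ^ (1/p) := by
  induction N with
  | zero =>
      simp only [Finset.range_zero, Finset.sum_empty]
      rw [ENNReal.zero_rpow_of_pos (hp0 hp), lintegral_zero,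
        ENNReal.zero_rpow_of_pos (hip hp)]
  | succ N ih =>
      have hS : Measurable fun x => ∑ k ∈ Finset.range N, f k x :=
        Finset.measurable_sum _ fun k _ => hf k
      have h := ENNReal.lintegral_Lp_add_le (μ := m) hS.aemeasurable (hf N).aemeasurable hp
      simp only [Pi.add_apply] at h
      rw [Finset.sum_range_succ]
      have e : ∫⁻ x, (∑ k ∈ Finset.range (N+1), f k x) ^ p ∂m
          = ∫⁻ x, (∑ k ∈ Finset.range N, f k x + f N x) ^ p ∂m :=
        lintegral_congr fun x => by rw [Finset.sum_range_succ]
      rw [e]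
      exact le_trans h (add_le_add ih le_rfl)

lemma lint_tsum_rpow_le (hp : 1 ≤ p) {f : ℕ → X → ℝ≥0∞} (hf : ∀ n, Measurable (f n)) :
    (∫⁻ x, (∑' k, f k x) ^ p ∂m) ^ (1/p) ≤ ∑' k, (∫⁻ x, f k x ^ p ∂m) ^ (1/p) := by
  rw [rpow_le_rpow_inv_iff hp]
  set C := ∑' k, (∫⁻ x, f k x ^ p ∂m) ^ (1/p) with hC
  have hmono : ∀ x, Monotone fun N => ∑ k ∈ Finset.range N, f k x := fun x a b hab =>
    Finset.sum_le_sum_of_subset (Finset.range_subset_range.mpr hab)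
  have key : ∀ x, (∑' k, f k x) ^ p = ⨆ N, (∑ k ∈ Finset.range N, f k x) ^ p := by
    intro x
    rw [ENNReal.tsum_eq_iSup_nat]
    apply le_antisymm
    · have h1 : Tendsto (fun N => ∑ k ∈ Finset.range N, f k x) atTop
          (𝓝 (⨆ N, ∑ k ∈ Finset.range N, f k x)) := tendsto_atTop_iSup (hmono x)
      have h2 : Tendsto (fun N => (∑ k ∈ Finset.range N, f k x) ^ p) atTop
          (𝓝 ((⨆ N, ∑ k ∈ Finset.range N, f k x) ^ p)) :=
        (ENNReal.continuous_rpow_const.tendsto _).comp h1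
      exact le_of_tendsto h2 (Filter.Eventually.of_forall fun N =>
        le_iSup (fun N => (∑ k ∈ Finset.range N, f k x) ^ p) N)
    · exact iSup_le fun N => ENNReal.rpow_le_rpow
        (le_iSup (fun N => ∑ k ∈ Finset.range N, f k x) N) (hp0 hp).le
  calc ∫⁻ x, (∑' k, f k x) ^ p ∂m
      = ∫⁻ x, ⨆ N, (∑ k ∈ Finset.range N, f k x) ^ p ∂m := by
        exact lintegral_congr fun x => key x
    _ = ⨆ N, ∫⁻ x, (∑ k ∈ Finset.range N, f k x) ^ p ∂m := by
        refine lintegral_iSup (fun N => ?_) (fun a b hab x => ?_)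
        · exact ENNReal.continuous_rpow_const.measurable.comp
            (Finset.measurable_sum _ fun k _ => hf k)
        · exact ENNReal.rpow_le_rpow (hmono x hab) (hp0 hp).le
    _ ≤ C ^ p := by
        refine iSup_le fun N => ?_
        rw [← rpow_le_rpow_inv_iff hp]
        exact le_trans (lint_sum_rpow_le hp hf N) (ENNReal.sum_le_tsum _)

lemma LpMem.toLoc {u : X → ℝ} (h : LpMem m p u) : LpLocMem m p u :=
  ⟨h.1, fun B _ _ => lt_of_le_of_lt (lpIntOn_mono_univ u B) h.2⟩

lemma lp_lt_top_iff (hp : 1 ≤ p) {a : ℝ≥0∞} : a ^ (1/p) < ∞ ↔ a < ∞ :=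
  ENNReal.rpow_lt_top_iff_of_pos (hip hp)

lemma LpMem.sub (hp : 1 ≤ p) {u v : X → ℝ} (hu : LpMem m p u) (hv : LpMem m p v) :
    LpMem m p (fun x => u x - v x) := by
  refine ⟨hu.1.sub hv.1, ?_⟩
  rw [← lp_lt_top_iff hp]
  refine lt_of_le_of_lt (minkowski_sub (m := m) hp hu.1 hv.1 _) ?_
  exact ENNReal.add_lt_top.2 ⟨(lp_lt_top_iff hp).2 hu.2, (lp_lt_top_iff hp).2 hv.2⟩

lemma LpMem.add (hp : 1 ≤ p) {u v : X → ℝ} (hu : LpMem m p u) (hv : LpMem m p v) :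
    LpMem m p (fun x => u x + v x) := by
  refine ⟨hu.1.add hv.1, ?_⟩
  rw [← lp_lt_top_iff hp]
  refine lt_of_le_of_lt (minkowski (m := m) hp hu.1 hv.1 _) ?_
  exact ENNReal.add_lt_top.2 ⟨(lp_lt_top_iff hp).2 hu.2, (lp_lt_top_iff hp).2 hv.2⟩

lemma LpMem.const_mul (hp : 1 ≤ p) {u : X → ℝ} (hu : LpMem m p u) (c : ℝ) :
    LpMem m p (fun x => c * u x) := by
  refine ⟨measurable_const.mul hu.1, ?_⟩
  rw [lpIntOn_const_mul hp]
  exact ENNReal.mul_lt_top (ENNReal.rpow_lt_top_of_nonneg (hp0 hp).le ENNReal.ofReal_ne_top) hu.2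

section DS
variable {S : DStructure X m p}

lemma energy_le_of_mem {u g : X → ℝ} (hg : g ∈ S.D u) :
    S.energy u ≤ lpIntOn m p g Set.univ := by
  unfold DStructure.energy DStructure.energyOn
  exact iInf₂_le g hg

lemma exists_grad {u : X → ℝ} {C : ℝ≥0∞} (h : S.energy u < C) :
    ∃ g ∈ S.D u, lpIntOn m p g Set.univ < C := by
  unfold DStructure.energy DStructure.energyOn at h
  simpa [iInf_lt_iff] using h

lemma zero_loc (hp : 1 ≤ p) : LpLocMem m p (fun _ : X => (0:ℝ)) := by
  refine ⟨measurable_const, fun B _ _ => ?_⟩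
  unfold lpIntOn
  simp [ENNReal.zero_rpow_of_pos (hp0 hp)]

lemma lpIntOn_zero (hp : 1 ≤ p) (B : Set X) : lpIntOn m p (fun _ : X => (0:ℝ)) B = 0 := by
  unfold lpIntOn
  simp [ENNReal.zero_rpow_of_pos (hp0 hp)]

lemma zero_grad (hp : 1 ≤ p) : (fun _ : X => (0:ℝ)) ∈ S.D (fun _ => 0) := by
  have h := S.axiomA1 (fun _ => 0) 0 (zero_loc hp) le_rfl (LipschitzWith.const' 0)
  have e : {x : X | (0:ℝ) < 0}.indicator (fun _ => ((0:ℝ≥0):ℝ)) = fun _ => (0:ℝ) := by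
    funext x; simp
  rwa [e] at h

lemma energy_zero (hp : 1 ≤ p) : S.energy (fun _ : X => (0:ℝ)) = 0 :=
  le_antisymm (le_trans (energy_le_of_mem (zero_grad hp)) (by rw [lpIntOn_zero hp]))
    zero_le

lemma add_grad {u₁ u₂ g₁ g₂ : X → ℝ} (h1 : LpLocMem m p u₁) (h2 : LpLocMem m p u₂)
    (hg1 : g₁ ∈ S.D u₁) (hg2 : g₂ ∈ S.D u₂) :
    (fun x => g₁ x + g₂ x) ∈ S.D (fun x => u₁ x + u₂ x) := by
  have h := S.axiomA2 u₁ u₂ g₁ g₂ (fun x => g₁ x + g₂ x) 1 1 h1 h2 hg1 hg2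
    ((S.measurable_of_mem _ _ hg1).add (S.measurable_of_mem _ _ hg2))
    (fun x => add_nonneg (S.nonneg_of_mem _ _ hg1 x) (S.nonneg_of_mem _ _ hg2 x))
    (Filter.Eventually.of_forall fun x => by simp)
  simpa using h

lemma smul_grad (hp : 1 ≤ p) {u g : X → ℝ} (h1 : LpLocMem m p u) (hg : g ∈ S.D u) (c : ℝ) :
    (fun x => |c| * g x) ∈ S.D (fun x => c * u x) := by
  have h := S.axiomA2 u (fun _ => 0) g (fun _ => 0) (fun x => |c| * g x) c 0 h1 (zero_loc hp)
    hg (zero_grad hp) (measurable_const.mul (S.measurable_of_mem _ _ hg))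
    (fun x => mul_nonneg (abs_nonneg c) (S.nonneg_of_mem _ _ hg x))
    (Filter.Eventually.of_forall fun x => by simp)
  simpa using h

lemma sub_grad (hp : 1 ≤ p) {u₁ u₂ g₁ g₂ : X → ℝ} (h1 : LpLocMem m p u₁) (h2 : LpLocMem m p u₂)
    (hg1 : g₁ ∈ S.D u₁) (hg2 : g₂ ∈ S.D u₂) :
    (fun x => g₁ x + g₂ x) ∈ S.D (fun x => u₁ x - u₂ x) := by
  have h2' : LpLocMem m p (fun x => (-1) * u₂ x) :=
    ⟨measurable_const.mul h2.1, fun B hB hBb => by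
      rw [show lpIntOn m p (fun x => (-1:ℝ) * u₂ x) B = lpIntOn m p u₂ B from
        lpIntOn_congr B fun x => by rw [neg_one_mul, abs_neg]]
      exact h2.2 B hB hBb⟩
  have hg2' : (fun x => g₂ x) ∈ S.D (fun x => (-1) * u₂ x) := by
    have := smul_grad hp h2 hg2 (-1)
    simpa using this
  have h := add_grad h1 h2' hg1 hg2'
  have e : (fun x => u₁ x + (-1) * u₂ x) = fun x => u₁ x - u₂ x := by
    funext x; ring
  rwa [e] at h

end DS

lemma LpLocMem.const_mul (hp : 1 ≤ p) {u : X → ℝ} (hu : LpLocMem m p u) (c : ℝ) :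
    LpLocMem m p (fun x => c * u x) := by
  refine ⟨measurable_const.mul hu.1, fun B hB hBb => ?_⟩
  rw [lpIntOn_const_mul hp]
  exact ENNReal.mul_lt_top (ENNReal.rpow_lt_top_of_nonneg (hp0 hp).le ENNReal.ofReal_ne_top)
    (hu.2 B hB hBb)

section DS2
variable {S : DStructure X m p}

lemma energy_smul_le (hp : 1 ≤ p) {u : X → ℝ} (hu : LpLocMem m p u) (c : ℝ) :
    S.energy (fun x => c * u x) ≤ ENNReal.ofReal |c| ^ p * S.energy u := by
  rcases eq_or_ne c 0 with rfl | hc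
  · have e : (fun x => (0:ℝ) * u x) = fun _ => (0:ℝ) := funext fun x => zero_mul (u x)
    rw [e, energy_zero hp]
    exact zero_le
  have hK0 : (0:ℝ≥0∞) < ENNReal.ofReal |c| ^ p :=
    ENNReal.rpow_pos (ENNReal.ofReal_pos.2 (abs_pos.2 hc)) ENNReal.ofReal_ne_top
  have hKt : ENNReal.ofReal |c| ^ p ≠ ∞ :=
    (ENNReal.rpow_lt_top_of_nonneg (hp0 hp).le ENNReal.ofReal_ne_top).ne
  by_cases hE : S.energy u = ∞
  · rw [hE, ENNReal.mul_top hK0.ne']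
    exact le_top
  refine ENNReal.le_of_forall_pos_le_add fun ε hε hfin => ?_
  set K := ENNReal.ofReal |c| ^ p with hK
  set δ := (ε : ℝ≥0∞) / K with hδdef
  have hδ : δ ≠ 0 := (ENNReal.div_pos (ENNReal.coe_ne_zero.2 hε.ne') hKt).ne'
  obtain ⟨g, hg, hgint⟩ := exists_grad (S := S)
    (ENNReal.lt_add_right hE hδ)
  calc S.energy (fun x => c * u x)
      ≤ lpIntOn m p (fun x => |c| * g x) Set.univ :=
        energy_le_of_mem (smul_grad hp hu hg c)
    _ = K * lpIntOn m p g Set.univ := by rw [lpIntOn_const_mul hp, abs_abs]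
    _ ≤ K * (S.energy u + δ) := mul_le_mul_right hgint.le _
    _ = K * S.energy u + K * δ := mul_add _ _ _
    _ = K * S.energy u + ε := by rw [hδdef, ENNReal.mul_div_cancel hK0.ne' hKt]

lemma energy_smul_eq (hp : 1 ≤ p) {u : X → ℝ} (hu : LpLocMem m p u) (hE : S.energy u ≠ ∞)
    (c : ℝ) : S.energy (fun x => c * u x) = ENNReal.ofReal |c| ^ p * S.energy u := by
  rcases eq_or_ne c 0 with rfl | hc
  · have e : (fun x => (0:ℝ) * u x) = fun _ => (0:ℝ) := funext fun x => zero_mul (u x)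
    rw [e, energy_zero hp, abs_zero, ENNReal.ofReal_zero,
      ENNReal.zero_rpow_of_pos (hp0 hp), zero_mul]
  refine le_antisymm (energy_smul_le hp hu c) ?_
  have hcu : LpLocMem m p (fun x => c * u x) := LpLocMem.const_mul hp hu c
  have e : (fun x => c⁻¹ * (c * u x)) = u := funext fun x => by field_simp
  calc ENNReal.ofReal |c| ^ p * S.energy u
      = ENNReal.ofReal |c| ^ p * S.energy (fun x => c⁻¹ * (c * u x)) := by rw [e]
    _ ≤ ENNReal.ofReal |c| ^ p * (ENNReal.ofReal |c⁻¹| ^ p * S.energy (fun x => c * u x)) :=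
        mul_le_mul_right (energy_smul_le hp hcu c⁻¹) _
    _ = S.energy (fun x => c * u x) := by
        rw [← mul_assoc, ← ENNReal.mul_rpow_of_nonneg _ _ (hp0 hp).le,
          ← ENNReal.ofReal_mul (abs_nonneg c), ← abs_mul, mul_inv_cancel₀ hc, abs_one,
          ENNReal.ofReal_one, ENNReal.one_rpow, one_mul]

lemma W1p_zero (hp : 1 ≤ p) : (fun _ : X => (0:ℝ)) ∈ S.W1p := by
  refine ⟨⟨measurable_const, ?_⟩, ?_⟩
  · rw [lpIntOn_zero hp]; exact ENNReal.zero_lt_top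
  · rw [energy_zero hp]; exact ENNReal.zero_lt_top

lemma W1p_add (hp : 1 ≤ p) {u v : X → ℝ} (hu : u ∈ S.W1p) (hv : v ∈ S.W1p) :
    (fun x => u x + v x) ∈ S.W1p := by
  obtain ⟨gu, hgu, hgui⟩ := exists_grad (S := S) (ENNReal.lt_add_right hu.2.ne one_ne_zero)
  obtain ⟨gv, hgv, hgvi⟩ := exists_grad (S := S) (ENNReal.lt_add_right hv.2.ne one_ne_zero)
  refine ⟨LpMem.add hp hu.1 hv.1, ?_⟩
  refine lt_of_le_of_lt (energy_le_of_mem (add_grad (LpMem.toLoc hu.1) (LpMem.toLoc hv.1) hgu hgv)) ?_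
  rw [← lp_lt_top_iff hp]
  refine lt_of_le_of_lt (minkowski (m := m) hp (S.measurable_of_mem _ _ hgu)
    (S.measurable_of_mem _ _ hgv) _) ?_
  refine ENNReal.add_lt_top.2 ⟨(lp_lt_top_iff hp).2 ?_, (lp_lt_top_iff hp).2 ?_⟩
  · exact lt_of_lt_of_le hgui (le_of_lt (ENNReal.add_lt_top.2 ⟨hu.2, ENNReal.one_lt_top⟩))
  · exact lt_of_lt_of_le hgvi (le_of_lt (ENNReal.add_lt_top.2 ⟨hv.2, ENNReal.one_lt_top⟩))

lemma W1p_sub (hp : 1 ≤ p) {u v : X → ℝ} (hu : u ∈ S.W1p) (hv : v ∈ S.W1p) :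
    (fun x => u x - v x) ∈ S.W1p := by
  obtain ⟨gu, hgu, hgui⟩ := exists_grad (S := S) (ENNReal.lt_add_right hu.2.ne one_ne_zero)
  obtain ⟨gv, hgv, hgvi⟩ := exists_grad (S := S) (ENNReal.lt_add_right hv.2.ne one_ne_zero)
  refine ⟨LpMem.sub hp hu.1 hv.1, ?_⟩
  refine lt_of_le_of_lt (energy_le_of_mem (sub_grad hp (LpMem.toLoc hu.1) (LpMem.toLoc hv.1) hgu hgv)) ?_
  rw [← lp_lt_top_iff hp]
  refine lt_of_le_of_lt (minkowski (m := m) hp (S.measurable_of_mem _ _ hgu)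
    (S.measurable_of_mem _ _ hgv) _) ?_
  refine ENNReal.add_lt_top.2 ⟨(lp_lt_top_iff hp).2 ?_, (lp_lt_top_iff hp).2 ?_⟩
  · exact lt_of_lt_of_le hgui (le_of_lt (ENNReal.add_lt_top.2 ⟨hu.2, ENNReal.one_lt_top⟩))
  · exact lt_of_lt_of_le hgvi (le_of_lt (ENNReal.add_lt_top.2 ⟨hv.2, ENNReal.one_lt_top⟩))

lemma W1p_smul (hp : 1 ≤ p) {u : X → ℝ} (c : ℝ) (hu : u ∈ S.W1p) :
    (fun x => c * u x) ∈ S.W1p := by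
  refine ⟨LpMem.const_mul hp hu.1 c, ?_⟩
  refine lt_of_le_of_lt (energy_smul_le hp (LpMem.toLoc hu.1) c) ?_
  exact ENNReal.mul_lt_top (ENNReal.rpow_lt_top_of_nonneg (hp0 hp).le ENNReal.ofReal_ne_top) hu.2

lemma wNorm_lt_top (hp : 1 ≤ p) {u : X → ℝ} (hu : u ∈ S.W1p) : S.wNorm u < ∞ :=
  ENNReal.rpow_lt_top_of_nonneg (hip hp).le (ENNReal.add_lt_top.2 ⟨hu.1.2, hu.2⟩).ne

lemma wNorm_eq_zero_iff (hp : 1 ≤ p) {u : X → ℝ} (hu : u ∈ S.W1p) :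
    (S.wNorm u = 0 ↔ u =ᵐ[m] fun _ => (0:ℝ)) := by
  constructor
  · intro h
    rcases ENNReal.rpow_eq_zero_iff.mp h with ⟨h0, -⟩ | ⟨-, hneg⟩
    swap
    · exact absurd hneg (not_lt.2 (hip hp).le)
    have hI : lpIntOn m p u Set.univ = 0 := by
      rcases add_eq_zero.mp h0 with ⟨hI, -⟩
      exact hI
    rw [lpIntOn_univ] at hI
    have hmeas : Measurable fun x => ENNReal.ofReal |u x| ^ p :=
      ENNReal.continuous_rpow_const.measurable.comp (meas_ofReal_abs hu.1.1)
    have := (lintegral_eq_zero_iff hmeas).mp hI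
    filter_upwards [this] with x hx
    simp only [Pi.zero_apply] at hx
    rcases ENNReal.rpow_eq_zero_iff.mp hx with ⟨h0', -⟩ | ⟨htop, -⟩
    · have := ENNReal.ofReal_eq_zero.mp h0'
      exact abs_eq_zero.mp (le_antisymm this (abs_nonneg _))
    · exact absurd htop ENNReal.ofReal_ne_top
  · intro h
    have hI : lpIntOn m p u Set.univ = 0 := by
      rw [lpIntOn_univ]
      rw [show ∫⁻ x, ENNReal.ofReal |u x| ^ p ∂m = ∫⁻ _, 0 ∂m from
        lintegral_congr_ae (h.mono fun x hx => by
          simp [hx, ENNReal.zero_rpow_of_pos (hp0 hp)]), lintegral_zero]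
    have hE : S.energy u = 0 := by
      unfold DStructure.energy DStructure.energyOn
      rw [S.congr_ae u (fun _ => 0) h]
      exact le_antisymm (le_trans (iInf₂_le _ (zero_grad hp)) (by rw [lpIntOn_zero hp]))
        zero_le
    unfold DStructure.wNorm
    rw [hI, hE, add_zero, ENNReal.zero_rpow_of_pos (hip hp)]

lemma wNorm_smul (hp : 1 ≤ p) {u : X → ℝ} (c : ℝ) (hu : u ∈ S.W1p) :
    S.wNorm (fun x => c * u x) = ENNReal.ofReal |c| * S.wNorm u := by
  unfold DStructure.wNorm
  rw [lpIntOn_const_mul hp, energy_smul_eq hp (LpMem.toLoc hu.1) hu.2.ne, ← mul_add,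
    ENNReal.mul_rpow_of_nonneg _ _ (hip hp).le, rpow_rpow_inv hp]

lemma two_point (hp : 1 ≤ p) (A B C D : ℝ≥0∞) :
    ((A ^ (1/p) + C ^ (1/p)) ^ p + (B ^ (1/p) + D ^ (1/p)) ^ p) ^ (1/p) ≤
      (A + B) ^ (1/p) + (C + D) ^ (1/p) := by
  have LP := ENNReal.Lp_add_le (Finset.univ : Finset (Fin 2))
    ![A ^ (1/p), B ^ (1/p)] ![C ^ (1/p), D ^ (1/p)] hp
  simp only [Fin.sum_univ_two, Matrix.cons_val_zero, Matrix.cons_val_one, Matrix.head_cons] at LP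
  rwa [rpow_inv_rpow hp, rpow_inv_rpow hp, rpow_inv_rpow hp, rpow_inv_rpow hp] at LP

lemma wNorm_add_le (hp : 1 ≤ p) {u v : X → ℝ} (hu : u ∈ S.W1p) (hv : v ∈ S.W1p) :
    S.wNorm (fun x => u x + v x) ≤ S.wNorm u + S.wNorm v := by
  have core : ∀ δ : ℝ≥0∞, δ ≠ 0 → S.wNorm (fun x => u x + v x) ≤
      (lpIntOn m p u Set.univ + (S.energy u + δ)) ^ (1/p) +
      (lpIntOn m p v Set.univ + (S.energy v + δ)) ^ (1/p) := by
    intro δ hδ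
    obtain ⟨gu, hgu, hgui⟩ := exists_grad (S := S) (ENNReal.lt_add_right hu.2.ne hδ)
    obtain ⟨gv, hgv, hgvi⟩ := exists_grad (S := S) (ENNReal.lt_add_right hv.2.ne hδ)
    have hE : S.energy (fun x => u x + v x) ≤ lpIntOn m p (fun x => gu x + gv x) Set.univ :=
      energy_le_of_mem (add_grad (LpMem.toLoc hu.1) (LpMem.toLoc hv.1) hgu hgv)
    have hI : lpIntOn m p (fun x => u x + v x) Set.univ ≤
        (lpIntOn m p u Set.univ ^ (1/p) + lpIntOn m p v Set.univ ^ (1/p)) ^ p := by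
      rw [← rpow_le_rpow_inv_iff hp]
      exact minkowski hp hu.1.1 hv.1.1 _
    have hG : lpIntOn m p (fun x => gu x + gv x) Set.univ ≤
        ((S.energy u + δ) ^ (1/p) + (S.energy v + δ) ^ (1/p)) ^ p := by
      rw [← rpow_le_rpow_inv_iff hp]
      refine le_trans (minkowski (m := m) hp (S.measurable_of_mem _ _ hgu)
        (S.measurable_of_mem _ _ hgv) _) ?_
      exact add_le_add (ENNReal.rpow_le_rpow hgui.le (hip hp).le)
        (ENNReal.rpow_le_rpow hgvi.le (hip hp).le)
    refine le_trans ?_ (two_point hp _ _ _ _)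
    unfold DStructure.wNorm
    exact ENNReal.rpow_le_rpow (add_le_add hI (le_trans hE hG)) (hip hp).le
  refine ENNReal.le_of_forall_pos_le_add fun ε hε hfin => ?_
  set δ := ((ε : ℝ≥0∞) / 2) ^ p with hδdef
  have hδ : δ ≠ 0 := by
    refine (ENNReal.rpow_pos (ENNReal.div_pos (ENNReal.coe_ne_zero.2 hε.ne') ENNReal.ofNat_ne_top)
      ?_).ne'
    exact (ENNReal.div_lt_top ENNReal.coe_ne_top two_ne_zero).ne
  have hδp : δ ^ (1/p) = (ε : ℝ≥0∞) / 2 := rpow_rpow_inv hp _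
  refine le_trans (core δ hδ) ?_
  calc (lpIntOn m p u Set.univ + (S.energy u + δ)) ^ (1/p) +
      (lpIntOn m p v Set.univ + (S.energy v + δ)) ^ (1/p)
      = ((lpIntOn m p u Set.univ + S.energy u) + δ) ^ (1/p) +
        ((lpIntOn m p v Set.univ + S.energy v) + δ) ^ (1/p) := by ring_nf
    _ ≤ ((lpIntOn m p u Set.univ + S.energy u) ^ (1/p) + δ ^ (1/p)) +
        ((lpIntOn m p v Set.univ + S.energy v) ^ (1/p) + δ ^ (1/p)) :=
        add_le_add (ENNReal.rpow_add_le_add_rpow _ _ (hip hp).le (hip1 hp))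
          (ENNReal.rpow_add_le_add_rpow _ _ (hip hp).le (hip1 hp))
    _ = S.wNorm u + S.wNorm v + (δ ^ (1/p) + δ ^ (1/p)) := by
        unfold DStructure.wNorm; ring
    _ = S.wNorm u + S.wNorm v + ε := by rw [hδp, ENNReal.add_halves]

end DS2

lemma lpIntOn_univ_nonneg {u : X → ℝ} (hnn : ∀ x, 0 ≤ u x) :
    lpIntOn m p u Set.univ = ∫⁻ x, ENNReal.ofReal (u x) ^ p ∂m := by
  rw [lpIntOn_univ]
  exact lintegral_congr fun x => by rw [abs_of_nonneg (hnn x)]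

lemma lpMem_finsum (hp : 1 ≤ p) {f : ℕ → X → ℝ} (h : ∀ k, LpMem m p (f k)) (N : ℕ) :
    LpMem m p (fun x => ∑ k ∈ Finset.range N, f k x) := by
  induction N with
  | zero =>
      have e : (fun x : X => ∑ k ∈ Finset.range 0, f k x) = fun _ => (0:ℝ) := by
        funext x; simp
      rw [e]
      exact ⟨measurable_const, by rw [lpIntOn_zero hp]; exact ENNReal.zero_lt_top⟩
  | succ N ih =>
      have e : (fun x : X => ∑ k ∈ Finset.range (N+1), f k x) =
          fun x => (∑ k ∈ Finset.range N, f k x) + f N x := by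
        funext x; rw [Finset.sum_range_succ]
      rw [e]
      exact LpMem.add hp ih (h N)

lemma lpInt_sub_sum_le (hp : 1 ≤ p) {w : ℕ → X → ℝ} (hw : ∀ k, Measurable (w k)) (i M : ℕ) :
    lpIntOn m p (fun x => w i x - w (i+M) x) Set.univ ^ (1/p) ≤
      ∑ k ∈ Finset.range M, lpIntOn m p (fun x => w (i+k+1) x - w (i+k) x) Set.univ ^ (1/p) := by
  induction M with
  | zero =>
      rw [show lpIntOn m p (fun x => w i x - w (i+0) x) Set.univ
          = lpIntOn m p (fun _ : X => (0:ℝ)) Set.univ from lpIntOn_congr _ fun x => by simp,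
        lpIntOn_zero hp, ENNReal.zero_rpow_of_pos (hip hp)]
      simp
  | succ M ih =>
      have h3 := minkowski_three (m := m) hp (hw i) (hw (i+M)) (hw (i+M+1)) Set.univ
      rw [Finset.sum_range_succ]
      refine le_trans h3 (add_le_add ih (le_of_eq ?_))
      congr 1
      exact lpIntOn_congr _ fun x => by rw [abs_sub_comm]

section DS3
variable {S : DStructure X m p}

lemma telescope_grad (hp : 1 ≤ p) {w : ℕ → X → ℝ} (hw : ∀ k, LpMem m p (w k)) {g : ℕ → X → ℝ}
    (hg : ∀ k, g k ∈ S.D (fun x => w (k+1) x - w k x)) (j N : ℕ) :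
    (fun x => ∑ k ∈ Finset.range N, g (j+k) x) ∈ S.D (fun x => w (j+N) x - w j x) := by
  induction N with
  | zero =>
      have e1 : (fun x : X => ∑ k ∈ Finset.range 0, g (j+k) x) = fun _ => (0:ℝ) := by
        funext x; simp
      have e2 : (fun x => w (j+0) x - w j x) = fun _ : X => (0:ℝ) := by
        funext x; simp
      rw [e1, e2]
      exact zero_grad hp
  | succ N ih =>
      have h := add_grad (S := S) (LpMem.toLoc (LpMem.sub hp (hw (j+N)) (hw j)))
        (LpMem.toLoc (LpMem.sub hp (hw (j+N+1)) (hw (j+N)))) ih (hg (j+N))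
      have e1 : (fun x => (∑ k ∈ Finset.range N, g (j+k) x) + g (j+N) x) =
          fun x => ∑ k ∈ Finset.range (N+1), g (j+k) x := by
        funext x; rw [Finset.sum_range_succ]
      have e2 : (fun x => (w (j+N) x - w j x) + (w (j+N+1) x - w (j+N) x)) =
          fun x => w (j+N+1) x - w j x := by
        funext x; ring
      rwa [e1, e2] at h

end DS3

section Comp
variable {S : DStructure X m p}
set_option maxHeartbeats 1000000 in
lemma completeness [BorelSpace X] (hp : 1 ≤ p) (u : ℕ → X → ℝ) (hu : ∀ n, u n ∈ S.W1p)
    (hcau : ∀ ε : ℝ≥0∞, 0 < ε → ∃ N : ℕ, ∀ n ≥ N, ∀ k ≥ N,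
      S.wNorm (fun x => u n x - u k x) < ε) :
    ∃ v ∈ S.W1p, Tendsto (fun n => S.wNorm (fun x => u n x - v x)) atTop (𝓝 0) := by
  classical
  -- geometric sequence
  set η : ℕ → ℝ≥0∞ := fun k => 2⁻¹ ^ k with hηdef
  have h2inv_lt : (2⁻¹ : ℝ≥0∞) < 1 := ENNReal.inv_lt_one.2 ENNReal.one_lt_two
  have h2inv_pos : (0 : ℝ≥0∞) < 2⁻¹ := ENNReal.inv_pos.2 ENNReal.ofNat_ne_top
  have h2inv_ne_top : (2⁻¹ : ℝ≥0∞) ≠ ∞ := ENNReal.inv_ne_top.2 two_ne_zero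
  have hηpos : ∀ k, 0 < η k := fun k => ENNReal.pow_pos h2inv_pos k
  have hηtop : ∀ k, η k ≠ ∞ := fun k => ENNReal.pow_ne_top h2inv_ne_top
  have hηanti : ∀ {a b : ℕ}, a ≤ b → η b ≤ η a := fun hab =>
    pow_le_pow_right_of_le_one' h2inv_lt.le hab
  have hηtend : Tendsto η atTop (𝓝 0) :=
    ENNReal.tendsto_pow_atTop_nhds_zero_of_lt_one h2inv_lt
  set c : ℝ≥0∞ := ∑' k, η k with hcdef
  have hc : c ≠ ∞ := by
    rw [hcdef, hηdef, ENNReal.tsum_geometric]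
    exact ENNReal.inv_ne_top.2 (tsub_pos_of_lt h2inv_lt).ne'
  have hTail : ∀ i, (∑' k, η (i + k)) = η i * c := by
    intro i
    rw [hcdef, hηdef]
    simp only [pow_add]
    exact ENNReal.tsum_mul_left
  -- subsequence
  choose N hN using fun k : ℕ => hcau (η k) (hηpos k)
  set φ : ℕ → ℕ := fun k => Nat.rec (N 0) (fun k ih => max (ih + 1) (N (k+1))) k with hφdef
  have hφsucc : ∀ k, φ k + 1 ≤ φ (k+1) := fun k => le_max_left _ _
  have hφmono : StrictMono φ := strictMono_nat_of_lt_succ fun k => hφsucc k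
  have hφN : ∀ k, N k ≤ φ k := by
    intro k
    cases k with
    | zero => exact le_rfl
    | succ k => exact le_max_right _ _
  set w : ℕ → X → ℝ := fun k => u (φ k) with hwdef
  have hwLp : ∀ k, LpMem m p (w k) := fun k => (hu (φ k)).1
  have hwm : ∀ k, Measurable (w k) := fun k => (hwLp k).1
  set d : ℕ → X → ℝ := fun k x => w (k+1) x - w k x with hddef
  have hdW : ∀ k, S.wNorm (d k) < η k := by
    intro k
    exact hN k (φ (k+1)) (le_trans (hφN k) (hφmono.monotone (Nat.le_succ k))) (φ k) (hφN k)
  have hIE : ∀ k, lpIntOn m p (d k) Set.univ + S.energy (d k) ≤ η k ^ p := by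
    intro k
    have h := ENNReal.rpow_le_rpow (le_of_lt (hdW k)) (hp0 hp).le
    unfold DStructure.wNorm at h
    rwa [rpow_inv_rpow hp] at h
  have hId : ∀ k, lpIntOn m p (d k) Set.univ ^ (1/p) ≤ η k := by
    intro k
    rw [rpow_le_rpow_inv_iff hp]
    exact le_trans le_self_add (hIE k)
  -- gradients of differences
  have hEd : ∀ k, S.energy (d k) < η k ^ p + η k ^ p := by
    intro k
    refine lt_of_le_of_lt (le_trans le_add_self (hIE k)) ?_
    exact ENNReal.lt_add_right (ENNReal.rpow_lt_top_of_nonneg (hp0 hp).le (hηtop k)).ne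
      (ENNReal.rpow_pos (hηpos k) (hηtop k)).ne'
  choose g hgD hgI using fun k => exists_grad (S := S) (hEd k)
  have hgm : ∀ k, Measurable (g k) := fun k => S.measurable_of_mem _ _ (hgD k)
  have hgnn : ∀ k x, 0 ≤ g k x := fun k x => S.nonneg_of_mem _ _ (hgD k) x
  have hgLp : ∀ k, LpMem m p (g k) := fun k =>
    ⟨hgm k, lt_of_lt_of_le (hgI k) (le_of_lt (ENNReal.add_lt_top.2
      ⟨ENNReal.rpow_lt_top_of_nonneg (hp0 hp).le (hηtop k),
       ENNReal.rpow_lt_top_of_nonneg (hp0 hp).le (hηtop k)⟩))⟩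
  have hβ : ∀ k, lpIntOn m p (g k) Set.univ ^ (1/p) ≤ 2 * η k := by
    intro k
    calc lpIntOn m p (g k) Set.univ ^ (1/p)
        ≤ (2 * η k ^ p) ^ (1/p) := by
          refine ENNReal.rpow_le_rpow ?_ (hip hp).le
          rw [two_mul]
          exact (hgI k).le
      _ = (2:ℝ≥0∞) ^ (1/p) * η k := by
          rw [ENNReal.mul_rpow_of_nonneg _ _ (hip hp).le, rpow_rpow_inv hp]
      _ ≤ 2 * η k := by
          refine mul_le_mul_left ?_ _
          calc (2:ℝ≥0∞) ^ (1/p) ≤ (2:ℝ≥0∞) ^ (1:ℝ) :=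
                ENNReal.rpow_le_rpow_of_exponent_le one_le_two (hip1 hp)
            _ = 2 := ENNReal.rpow_one 2
  -- a.e. convergence of the subsequence
  have hdm : ∀ k, Measurable fun x => ENNReal.ofReal |d k x| := fun k =>
    meas_ofReal_abs ((hwm (k+1)).sub (hwm k))
  set Φ : X → ℝ≥0∞ := fun x => ∑' k, ENNReal.ofReal |d k x| with hΦdef
  have hΦm : Measurable Φ := Measurable.ennreal_tsum hdm
  have hΦint : (∫⁻ x, Φ x ^ p ∂m) ^ (1/p) ≤ c := by
    refine le_trans (lint_tsum_rpow_le hp hdm) ?_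
    rw [hcdef]
    refine ENNReal.tsum_le_tsum fun k => ?_
    rw [← lpIntOn_univ]
    exact hId k
  have hΦfin : ∀ᵐ x ∂m, Φ x < ∞ := by
    have h1 : ∫⁻ x, Φ x ^ p ∂m ≠ ∞ := by
      have h2 := (rpow_le_rpow_inv_iff hp).mp hΦint
      exact (lt_of_le_of_lt h2 (ENNReal.rpow_lt_top_of_nonneg (hp0 hp).le hc)).ne
    have h2 := ae_lt_top (ENNReal.continuous_rpow_const.measurable.comp hΦm) h1
    filter_upwards [h2] with x hx
    rw [← ENNReal.rpow_lt_top_iff_of_pos (hp0 hp)]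
    exact hx
  have hconv : ∀ᵐ x ∂m, ∃ l : ℝ, Tendsto (fun k => w k x) atTop (𝓝 l) := by
    filter_upwards [hΦfin] with x hx
    have hsumm : Summable fun k => |d k x| := by
      have h3 := ENNReal.summable_toReal hx.ne
      refine h3.congr fun k => ?_
      rw [ENNReal.toReal_ofReal (abs_nonneg _)]
    have hsum2 : Summable fun k => d k x := hsumm.of_abs
    have hpart : ∀ n : ℕ, w n x = w 0 x + ∑ k ∈ Finset.range n, d k x := by
      intro n
      induction n with
      | zero => simp
      | succ n ih =>
          rw [Finset.sum_range_succ, ← add_assoc, ← ih, hddef]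
          ring
    refine ⟨w 0 x + ∑' k, d k x, ?_⟩
    have h4 : Tendsto (fun n => w 0 x + ∑ k ∈ Finset.range n, d k x) atTop
        (𝓝 (w 0 x + ∑' k, d k x)) := tendsto_const_nhds.add hsum2.hasSum.tendsto_sum_nat
    exact h4.congr fun n => (hpart n).symm
  obtain ⟨v, hvm, hvconv⟩ := measurable_limit_of_tendsto_metrizable_ae
    (fun k => (hwm k).aemeasurable) hconv
  -- L^p bound for w i - v
  have hηmul : ∀ a b : ℕ, η (a+b) = η a * η b := fun a b => pow_add _ a b
  have hwv : ∀ i, lpIntOn m p (fun x => w i x - v x) Set.univ ≤ (η i * c) ^ p := by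
    intro i
    have hmeasN : ∀ NN : ℕ, Measurable fun x => ENNReal.ofReal |w i x - w NN x| ^ p := fun NN =>
      ENNReal.continuous_rpow_const.measurable.comp (meas_ofReal_abs ((hwm i).sub (hwm NN)))
    have hae : ∀ᵐ x ∂m, ENNReal.ofReal |w i x - v x| ^ p =
        liminf (fun NN => ENNReal.ofReal |w i x - w NN x| ^ p) atTop := by
      filter_upwards [hvconv] with x hx
      have hcont : Tendsto (fun NN => ENNReal.ofReal |w i x - w NN x| ^ p) atTop
          (𝓝 (ENNReal.ofReal |w i x - v x| ^ p)) := by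
        have t1 : Tendsto (fun NN => w i x - w NN x) atTop (𝓝 (w i x - v x)) :=
          tendsto_const_nhds.sub hx
        have t2 : Tendsto (fun NN => |w i x - w NN x|) atTop (𝓝 |w i x - v x|) :=
          (continuous_abs.tendsto _).comp t1
        have t3 : Tendsto (fun NN => ENNReal.ofReal |w i x - w NN x|) atTop
            (𝓝 (ENNReal.ofReal |w i x - v x|)) := (ENNReal.continuous_ofReal.tendsto _).comp t2
        exact (ENNReal.continuous_rpow_const.tendsto _).comp t3
      exact hcont.liminf_eq.symm
    have hfatou : lpIntOn m p (fun x => w i x - v x) Set.univ ≤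
        liminf (fun NN => lpIntOn m p (fun x => w i x - w NN x) Set.univ) atTop := by
      rw [lpIntOn_univ]
      calc ∫⁻ x, ENNReal.ofReal |w i x - v x| ^ p ∂m
          = ∫⁻ x, liminf (fun NN => ENNReal.ofReal |w i x - w NN x| ^ p) atTop ∂m :=
            lintegral_congr_ae hae
        _ ≤ liminf (fun NN => ∫⁻ x, ENNReal.ofReal |w i x - w NN x| ^ p ∂m) atTop :=
            lintegral_liminf_le hmeasN
        _ = liminf (fun NN => lpIntOn m p (fun x => w i x - w NN x) Set.univ) atTop := by
            congr 1
            funext NN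
            rw [lpIntOn_univ]
    refine le_trans hfatou (liminf_le_of_frequently_le' (Filter.Eventually.frequently ?_))
    filter_upwards [eventually_ge_atTop i] with NN hNN
    obtain ⟨M, rfl⟩ := Nat.exists_eq_add_of_le hNN
    rw [← rpow_le_rpow_inv_iff hp]
    refine le_trans (lpInt_sub_sum_le hp hwm i M) ?_
    calc ∑ k ∈ Finset.range M, lpIntOn m p (fun x => w (i+k+1) x - w (i+k) x) Set.univ ^ (1/p)
        ≤ ∑ k ∈ Finset.range M, η (i+k) := Finset.sum_le_sum fun k _ => hId (i+k)
      _ ≤ ∑' k, η (i+k) := ENNReal.sum_le_tsum _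
      _ = η i * c := hTail i
  -- v is in L^p
  have hvLp : LpMem m p v := by
    refine ⟨hvm, ?_⟩
    have h3 := minkowski_sub (m := m) (v := fun x => w 0 x - v x) hp (hwm 0) ((hwm 0).sub hvm) Set.univ
    rw [show lpIntOn m p (fun x => w 0 x - (w 0 x - v x)) Set.univ
      = lpIntOn m p v Set.univ from lpIntOn_congr _ fun x => by ring_nf] at h3
    rw [← lp_lt_top_iff hp]
    refine lt_of_le_of_lt h3 (ENNReal.add_lt_top.2 ⟨(lp_lt_top_iff hp).2 (hwLp 0).2,
      (lp_lt_top_iff hp).2 (lt_of_le_of_lt (hwv 0) ?_)⟩)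
    exact ENNReal.rpow_lt_top_of_nonneg (hp0 hp).le (ENNReal.mul_ne_top (hηtop 0) hc)
  -- gradient sums
  set T : ℕ → X → ℝ≥0∞ := fun j x => ∑' k, ENNReal.ofReal (g (j+k) x) with hTdef
  have hTm : ∀ j, Measurable (T j) := fun j =>
    Measurable.ennreal_tsum fun k => ENNReal.measurable_ofReal.comp (hgm (j+k))
  have hgint_eq : ∀ i, (∫⁻ x, ENNReal.ofReal (g i x) ^ p ∂m) = lpIntOn m p (g i) Set.univ :=
    fun i => (lpIntOn_univ_nonneg fun x => hgnn i x).symm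
  have hTint : ∀ j, (∫⁻ x, T j x ^ p ∂m) ^ (1/p) ≤ 2 * (η j * c) := by
    intro j
    refine le_trans (lint_tsum_rpow_le hp fun k => ENNReal.measurable_ofReal.comp (hgm (j+k))) ?_
    calc ∑' k, (∫⁻ x, ENNReal.ofReal (g (j+k) x) ^ p ∂m) ^ (1/p)
        ≤ ∑' k, 2 * η (j+k) := ENNReal.tsum_le_tsum fun k => by
          rw [hgint_eq (j+k)]; exact hβ (j+k)
      _ = 2 * ∑' k, η (j+k) := ENNReal.tsum_mul_left
      _ = 2 * (η j * c) := by rw [hTail j]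
  have hTf : ∀ j, ∫⁻ x, T j x ^ p ∂m ≤ (2 * (η j * c)) ^ p := fun j =>
    (rpow_le_rpow_inv_iff hp).mp (hTint j)
  have hTfin : ∀ j, ∀ᵐ x ∂m, T j x < ∞ := by
    intro j
    have h1 : ∫⁻ x, T j x ^ p ∂m ≠ ∞ :=
      (lt_of_le_of_lt (hTf j) (ENNReal.rpow_lt_top_of_nonneg (hp0 hp).le
        (ENNReal.mul_ne_top ENNReal.ofNat_ne_top (ENNReal.mul_ne_top (hηtop j) hc)))).ne
    have h2 := ae_lt_top (ENNReal.continuous_rpow_const.measurable.comp (hTm j)) h1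
    filter_upwards [h2] with x hx
    rw [← ENNReal.rpow_lt_top_iff_of_pos (hp0 hp)]
    exact hx
  set G : ℕ → X → ℝ := fun j x => (T j x).toReal with hGdef
  have hGm : ∀ j, Measurable (G j) := fun j => (hTm j).ennreal_toReal
  have hGnn : ∀ j, (0:X → ℝ) ≤ G j := fun j => Pi.le_def.mpr fun x => ENNReal.toReal_nonneg
  have hGI : ∀ j, lpIntOn m p (G j) Set.univ ≤ (2 * (η j * c)) ^ p := by
    intro j
    refine le_trans ?_ (hTf j)
    rw [lpIntOn_univ_nonneg fun x => ENNReal.toReal_nonneg]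
    exact lintegral_mono fun x => ENNReal.rpow_le_rpow ENNReal.ofReal_toReal_le (hp0 hp).le
  -- A5 gives gradients for v - w j
  have hGD : ∀ j, G j ∈ S.D (fun x => v x - w j x) := by
    intro j
    have hPD : ∀ NN : ℕ, (fun x => ∑ k ∈ Finset.range (NN+1), g (j+k) x) ∈
        S.D (fun x => w (j+1+NN) x - w j x) := by
      intro NN
      rw [show j+1+NN = j + (NN+1) from by omega]
      exact telescope_grad hp hwLp (fun k => hgD k) j (NN+1)
    refine S.axiomA5 (fun NN x => w (j+1+NN) x - w j x)
      (fun NN x => ∑ k ∈ Finset.range (NN+1), g (j+k) x) (fun x => v x - w j x) (G j)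
      (fun NN => LpMem.toLoc (LpMem.sub hp (hwLp (j+1+NN)) (hwLp j)))
      hPD
      (fun NN => lpMem_finsum hp (fun k => hgLp (j+k)) (NN+1))
      (LpMem.toLoc (LpMem.sub hp hvLp (hwLp j)))
      (hGm j) (hGnn j) ?_ ?_
    · -- LpLocTendsto
      intro B hB hBb
      have hbound : ∀ NN, lpIntOn m p
          (fun x => (w (j+1+NN) x - w j x) - (v x - w j x)) B ≤ (η NN * c) ^ p := by
        intro NN
        rw [show lpIntOn m p (fun x => (w (j+1+NN) x - w j x) - (v x - w j x)) B
          = lpIntOn m p (fun x => w (j+1+NN) x - v x) B from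
          lpIntOn_congr _ fun x => by rw [show (w (j+1+NN) x - w j x) - (v x - w j x)
            = w (j+1+NN) x - v x from by ring]]
        refine le_trans (lpIntOn_mono_univ _ _) (le_trans (hwv (j+1+NN)) ?_)
        exact ENNReal.rpow_le_rpow (mul_le_mul_left (hηanti (by omega)) c) (hp0 hp).le
      have hlim : Tendsto (fun NN => (η NN * c) ^ p) atTop (𝓝 0) := by
        have h1 : Tendsto (fun NN => η NN * c) atTop (𝓝 0) := by
          have h0 := ENNReal.Tendsto.mul_const hηtend (Or.inr hc)
          rwa [zero_mul] at h0
        have h2 := ((ENNReal.continuous_rpow_const (y := p)).tendsto (0:ℝ≥0∞)).comp h1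
        simp only [Function.comp_def, ENNReal.zero_rpow_of_pos (hp0 hp)] at h2
        exact h2
      exact tendsto_of_tendsto_of_tendsto_of_le_of_le tendsto_const_nhds hlim
        (fun NN => zero_le) hbound
    · -- LpTendsto of the gradient partial sums
      show Tendsto (fun NN => lpIntOn m p
        (fun x => (∑ k ∈ Finset.range (NN+1), g (j+k) x) - G j x) Set.univ) atTop (𝓝 0)
      have hbound : ∀ NN : ℕ, lpIntOn m p
          (fun x => (∑ k ∈ Finset.range (NN+1), g (j+k) x) - G j x) Set.univ
          ≤ (2 * (η j * c) * η (NN+1)) ^ p := by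
        intro NN
        have haebd : ∀ᵐ x ∂m,
            ENNReal.ofReal |(∑ k ∈ Finset.range (NN+1), g (j+k) x) - G j x| ^ p
            ≤ (∑' k, ENNReal.ofReal (g (j + (k + (NN+1))) x)) ^ p := by
          filter_upwards [hTfin j] with x hx
          refine ENNReal.rpow_le_rpow ?_ (hp0 hp).le
          have hsumm : Summable fun k => g (j+k) x := by
            have h3 := ENNReal.summable_toReal hx.ne
            refine h3.congr fun k => ?_
            rw [ENNReal.toReal_ofReal (hgnn _ x)]
          have hGx : G j x = ∑' k, g (j+k) x := by
            show (T j x).toReal = _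
            rw [show T j x = ∑' k, ENNReal.ofReal (g (j+k) x) from rfl]
            rw [ENNReal.tsum_toReal_eq fun k => ENNReal.ofReal_ne_top]
            exact tsum_congr fun k => ENNReal.toReal_ofReal (hgnn _ x)
          have htail : Summable fun k => g (j + (k + (NN+1))) x :=
            (summable_nat_add_iff (NN+1)).2 hsumm
          have hkey : (∑ k ∈ Finset.range (NN+1), g (j+k) x)
              + ∑' k, g (j + (k + (NN+1))) x = ∑' k, g (j+k) x :=
            Summable.sum_add_tsum_nat_add (NN+1) hsumm
          have htnn : (0:ℝ) ≤ ∑' k, g (j + (k + (NN+1))) x := tsum_nonneg fun k => hgnn _ x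
          have habs : |(∑ k ∈ Finset.range (NN+1), g (j+k) x) - G j x|
              = ∑' k, g (j + (k + (NN+1))) x := by
            rw [hGx, ← hkey]
            rw [show (∑ k ∈ Finset.range (NN+1), g (j+k) x) -
              ((∑ k ∈ Finset.range (NN+1), g (j+k) x) + ∑' k, g (j + (k + (NN+1))) x)
              = -(∑' k, g (j + (k + (NN+1))) x) from by ring, abs_neg, abs_of_nonneg htnn]
          rw [habs, ENNReal.ofReal_tsum_of_nonneg (fun k => hgnn _ x) htail]
        rw [lpIntOn_univ]
        refine le_trans (lintegral_mono_ae haebd) ?_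
        rw [← rpow_le_rpow_inv_iff hp]
        refine le_trans (lint_tsum_rpow_le hp fun k =>
          ENNReal.measurable_ofReal.comp (hgm _)) ?_
        calc ∑' k, (∫⁻ x, ENNReal.ofReal (g (j + (k + (NN+1))) x) ^ p ∂m) ^ (1/p)
            ≤ ∑' k, 2 * η (j + (k + (NN+1))) := ENNReal.tsum_le_tsum fun k => by
              rw [hgint_eq]; exact hβ _
          _ = ∑' k, (2 * (η j * η (NN+1))) * η k := tsum_congr fun k => by
              rw [show j + (k + (NN+1)) = (j + (NN+1)) + k from by omega,
                hηmul (j + (NN+1)) k, hηmul j (NN+1)]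
              ring
          _ = (2 * (η j * η (NN+1))) * c := ENNReal.tsum_mul_left
          _ = 2 * (η j * c) * η (NN+1) := by ring
      have hlim : Tendsto (fun NN : ℕ => (2 * (η j * c) * η (NN+1)) ^ p) atTop (𝓝 0) := by
        have h1 : Tendsto (fun NN : ℕ => η (NN+1)) atTop (𝓝 0) :=
          hηtend.comp (tendsto_add_atTop_nat 1)
        have h0 := ENNReal.Tendsto.const_mul (a := 2 * (η j * c)) h1
          (Or.inr (ENNReal.mul_ne_top ENNReal.ofNat_ne_top (ENNReal.mul_ne_top (hηtop j) hc)))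
        rw [mul_zero] at h0
        have h2 := ((ENNReal.continuous_rpow_const (y := p)).tendsto (0:ℝ≥0∞)).comp h0
        simp only [Function.comp_def, ENNReal.zero_rpow_of_pos (hp0 hp)] at h2
        exact h2
      exact tendsto_of_tendsto_of_tendsto_of_le_of_le tendsto_const_nhds hlim
        (fun NN => zero_le) hbound
  -- energies of v - w j and w j - v
  have hDwv : ∀ j, (fun x => G j x) ∈ S.D (fun x => w j x - v x) := by
    intro j
    have h := smul_grad hp (LpMem.toLoc (LpMem.sub hp hvLp (hwLp j))) (hGD j) (-1)
    have e1 : (fun x => |(-1:ℝ)| * G j x) = fun x => G j x := funext fun x => by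
      rw [abs_neg, abs_one, one_mul]
    have e2 : (fun x => (-1:ℝ) * (v x - w j x)) = fun x => w j x - v x := funext fun x => by ring
    rwa [e1, e2] at h
  have hEwv : ∀ j, S.energy (fun x => w j x - v x) ≤ (2 * (η j * c)) ^ p := fun j =>
    le_trans (energy_le_of_mem (hDwv j)) (hGI j)
  have hvW : v ∈ S.W1p := by
    refine ⟨hvLp, ?_⟩
    obtain ⟨h0, hh0, hh0i⟩ := exists_grad (S := S)
      (ENNReal.lt_add_right (hu (φ 0)).2.ne one_ne_zero)
    have hadd := add_grad (S := S) (LpMem.toLoc (LpMem.sub hp hvLp (hwLp 0)))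
      (LpMem.toLoc (hwLp 0)) (hGD 0) hh0
    have e : (fun x => (v x - w 0 x) + u (φ 0) x) = v :=
      funext fun x => sub_add_cancel (v x) (w 0 x)
    rw [e] at hadd
    refine lt_of_le_of_lt (energy_le_of_mem hadd) ?_
    rw [← lp_lt_top_iff hp]
    refine lt_of_le_of_lt (minkowski (m := m) hp (hGm 0) (S.measurable_of_mem _ _ hh0) _) ?_
    refine ENNReal.add_lt_top.2 ⟨(lp_lt_top_iff hp).2 ?_, (lp_lt_top_iff hp).2 ?_⟩
    · exact lt_of_le_of_lt (hGI 0) (ENNReal.rpow_lt_top_of_nonneg (hp0 hp).le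
        (ENNReal.mul_ne_top ENNReal.ofNat_ne_top (ENNReal.mul_ne_top (hηtop 0) hc)))
    · exact lt_of_lt_of_le hh0i (le_of_lt (ENNReal.add_lt_top.2 ⟨(hu (φ 0)).2,
        ENNReal.one_lt_top⟩))
  have hwvW : ∀ j, (fun x => w j x - v x) ∈ S.W1p := fun j =>
    ⟨LpMem.sub hp (hwLp j) hvLp, lt_of_le_of_lt (hEwv j)
      (ENNReal.rpow_lt_top_of_nonneg (hp0 hp).le
        (ENNReal.mul_ne_top ENNReal.ofNat_ne_top (ENNReal.mul_ne_top (hηtop j) hc)))⟩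
  have hwN : ∀ j, S.wNorm (fun x => w j x - v x) ≤ η j * c + 2 * (η j * c) := by
    intro j
    unfold DStructure.wNorm
    refine le_trans (ENNReal.rpow_le_rpow (add_le_add (hwv j) (hEwv j)) (hip hp).le) ?_
    exact ENNReal.rpow_add_rpow_le_add _ _ hp
  have hwNtend : Tendsto (fun j => η j * c + 2 * (η j * c)) atTop (𝓝 0) := by
    have h1 : Tendsto (fun j => η j * c) atTop (𝓝 0) := by
      have h0 := ENNReal.Tendsto.mul_const hηtend (Or.inr hc)
      rwa [zero_mul] at h0
    have h2 : Tendsto (fun j => 2 * (η j * c)) atTop (𝓝 0) := by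
      have h0 := ENNReal.Tendsto.const_mul (a := 2) h1 (Or.inr ENNReal.ofNat_ne_top)
      rwa [mul_zero] at h0
    have h3 := h1.add h2
    rwa [add_zero] at h3
  -- conclusion
  refine ⟨v, hvW, ?_⟩
  rw [ENNReal.tendsto_atTop_zero]
  intro ε hε
  have hε2 : (0:ℝ≥0∞) < ε / 2 := ENNReal.div_pos hε.ne' ENNReal.ofNat_ne_top
  obtain ⟨N₀, hN₀⟩ := hcau (ε / 2) hε2
  obtain ⟨j, hjlt, hjge⟩ := ((hwNtend.eventually_lt_const hε2).and
    (eventually_ge_atTop N₀)).exists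
  refine ⟨φ j, fun n hn => ?_⟩
  have hφjN : N₀ ≤ φ j := le_trans hjge (le_trans (hφmono.le_apply) le_rfl)
  have hterm1 : S.wNorm (fun x => u n x - w j x) ≤ ε / 2 :=
    (hN₀ n (le_trans hφjN hn) (φ j) hφjN).le
  have hterm2 : S.wNorm (fun x => w j x - v x) ≤ ε / 2 := le_trans (hwN j) hjlt.le
  have e : (fun x => (u n x - w j x) + (w j x - v x)) = fun x => u n x - v x :=
    funext fun x => by ring
  calc S.wNorm (fun x => u n x - v x)
      = S.wNorm (fun x => (u n x - w j x) + (w j x - v x)) := by rw [e]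
    _ ≤ S.wNorm (fun x => u n x - w j x) + S.wNorm (fun x => w j x - v x) :=
        wNorm_add_le hp (W1p_sub hp (hu n) (hu (φ j))) (hwvW j)
    _ ≤ ε / 2 + ε / 2 := add_le_add hterm1 hterm2
    _ = ε := ENNReal.add_halves ε



end Comp

end SobAux


open AxSob AxSob.DStructure

/-- Theorem 1.5 of Gol'dshtein–Troyanov: `W^{1,p}(X,d,m,D)` endowed with the norm
`‖u‖ = (‖u‖_{L^p}^p + E_p(u))^{1/p}` is a Banach space: it is a linear subspace,
`wNorm` satisfies the axioms of a norm on it, and it is complete. -/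
theorem sobolev_space_is_banach {X : Type*} [MetricSpace X] [CompleteSpace X]
    [TopologicalSpace.SeparableSpace X] [MeasurableSpace X] [BorelSpace X]
    (m : MeasureTheory.Measure X) (hm : m ≠ 0)
    (hball : ∀ (x : X) (r : ℝ), m (Metric.ball x r) < ∞)
    (p : ℝ) (hp : 1 ≤ p) (S : DStructure X m p) :
    ((fun _ => (0 : ℝ)) ∈ S.W1p) ∧
    (∀ u ∈ S.W1p, ∀ v ∈ S.W1p, (fun x => u x + v x) ∈ S.W1p) ∧
    (∀ c : ℝ, ∀ u ∈ S.W1p, (fun x => c * u x) ∈ S.W1p) ∧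
    (∀ u ∈ S.W1p, S.wNorm u < ∞) ∧
    (∀ u ∈ S.W1p, (S.wNorm u = 0 ↔ u =ᵐ[m] fun _ => (0 : ℝ))) ∧
    (∀ c : ℝ, ∀ u ∈ S.W1p, S.wNorm (fun x => c * u x) = ENNReal.ofReal |c| * S.wNorm u) ∧
    (∀ u ∈ S.W1p, ∀ v ∈ S.W1p, S.wNorm (fun x => u x + v x) ≤ S.wNorm u + S.wNorm v) ∧
    (∀ u : ℕ → X → ℝ, (∀ n, u n ∈ S.W1p) →
      (∀ ε : ℝ≥0∞, 0 < ε → ∃ N : ℕ, ∀ n ≥ N, ∀ k ≥ N,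
        S.wNorm (fun x => u n x - u k x) < ε) →
      ∃ v ∈ S.W1p, Filter.Tendsto (fun n => S.wNorm (fun x => u n x - v x))
        Filter.atTop (𝓝 0)) := by
  exact ⟨SobAux.W1p_zero hp,
    fun u hu v hv => SobAux.W1p_add hp hu hv,
    fun c u hu => SobAux.W1p_smul hp c hu,
    fun u hu => SobAux.wNorm_lt_top hp hu,
    fun u hu => SobAux.wNorm_eq_zero_iff hp hu,
    fun c u hu => SobAux.wNorm_smul hp c hu,
    fun u hu v hv => SobAux.wNorm_add_le hp hu hv,
    fun u hu hcau => SobAux.completeness hp u hu hcau⟩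
end
end

section
/- Let (X,d,m) be a metric measure space, p ∈ (1,∞), and let D be a D-structure on (X,d,m). Then for every u ∈ S^p(X) there exists a unique element Du ∈ D[u] ∩ L^p(m) (the minimal pseudo-gradient of u) such that E_p(u) = ‖Du‖_{L^p(m)}^p. -/
open Filter Set
open scoped ENNReal NNReal Topology

noncomputable section

open MeasureTheory


private lemma real_add_rpow_le {x y z : ℝ} (hx : 0 ≤ x) (hy : 0 ≤ y) (hz : 1 ≤ z) :
    x ^ z + y ^ z ≤ (x + y) ^ z := by
  rw [← Real.coe_toNNReal x hx, ← Real.coe_toNNReal y hy, ← NNReal.coe_rpow, ← NNReal.coe_rpow,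
    ← NNReal.coe_add, ← NNReal.coe_add, ← NNReal.coe_rpow]
  exact_mod_cast NNReal.add_rpow_le_rpow_add _ _ hz

private lemma midpoint_rpow_le {p a b : ℝ} (hp : 1 ≤ p) (ha : 0 ≤ a) (hb : 0 ≤ b) :
    ((a + b) / 2) ^ p ≤ (a ^ p + b ^ p) / 2 := by
  have h := (convexOn_rpow hp).2 (mem_Ici.2 ha) (mem_Ici.2 hb)
      (by norm_num : (0:ℝ) ≤ 1/2) (by norm_num : (0:ℝ) ≤ 1/2) (by norm_num)
  simp only [smul_eq_mul] at h
  calc ((a + b) / 2) ^ p = (1/2 * a + 1/2 * b) ^ p := by ring_nf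
    _ ≤ 1/2 * a ^ p + 1/2 * b ^ p := h
    _ = (a ^ p + b ^ p) / 2 := by ring

private lemma real_clarkson {p a b : ℝ} (hp : 2 ≤ p) (ha : 0 ≤ a) (hb : 0 ≤ b) :
    (|a - b| / 2) ^ p + ((a + b) / 2) ^ p ≤ (a ^ p + b ^ p) / 2 := by
  set u := (a + b) / 2 with hu
  set v := |a - b| / 2 with hv
  have hu0 : 0 ≤ u := by positivity
  have hv0 : 0 ≤ v := by positivity
  have h2 : (1:ℝ) ≤ p / 2 := by linarith
  have sqr : ∀ c : ℝ, 0 ≤ c → c ^ p = (c ^ 2) ^ (p / 2) := by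
    intro c hc
    rw [← Real.rpow_natCast c 2, ← Real.rpow_mul hc, show ((2:ℕ):ℝ) * (p/2) = p by push_cast; ring]
  have hadd : (v ^ 2) ^ (p/2) + (u ^ 2) ^ (p/2) ≤ (v ^ 2 + u ^ 2) ^ (p/2) :=
    real_add_rpow_le (by positivity) (by positivity) h2
  have hsq : v ^ 2 + u ^ 2 = (a ^ 2 + b ^ 2) / 2 := by
    rw [hv, hu, div_pow, div_pow, sq_abs]; ring
  have hjen : ((a ^ 2 + b ^ 2) / 2) ^ (p/2) ≤ ((a ^ 2) ^ (p/2) + (b ^ 2) ^ (p/2)) / 2 :=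
    midpoint_rpow_le h2 (by positivity) (by positivity)
  calc v ^ p + u ^ p = (v ^ 2) ^ (p/2) + (u ^ 2) ^ (p/2) := by rw [← sqr v hv0, ← sqr u hu0]
    _ ≤ (v ^ 2 + u ^ 2) ^ (p/2) := hadd
    _ = ((a ^ 2 + b ^ 2) / 2) ^ (p/2) := by rw [hsq]
    _ ≤ ((a ^ 2) ^ (p/2) + (b ^ 2) ^ (p/2)) / 2 := hjen
    _ = (a ^ p + b ^ p) / 2 := by rw [← sqr a ha, ← sqr b hb]

private lemma real_strong_convex {p a b : ℝ} (hp1 : 1 < p) (hp2 : p ≤ 2) (ha : 0 ≤ a)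
    (hb : 0 ≤ b) :
    p * (p - 1) / 8 * ((a - b) ^ 2 * (a + b) ^ (p - 2)) + ((a + b) / 2) ^ p
      ≤ (a ^ p + b ^ p) / 2 := by
  have hp0 : (0:ℝ) < p := by linarith
  rcases eq_or_lt_of_le (by positivity : (0:ℝ) ≤ a + b) with hs | hs
  · have ha0 : a = 0 := by linarith [abs_nonneg a]
    have hb0 : b = 0 := by linarith
    simp [ha0, hb0, Real.zero_rpow hp0.ne']
  · set s := a + b with hsdef
    set K := p * (p - 1) * s ^ (p - 2) with hK
    have hK0 : 0 ≤ K := by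
      exact mul_nonneg (mul_nonneg hp0.le (by linarith)) (Real.rpow_nonneg hs.le _)
    set G := fun t : ℝ => t ^ p - K / 2 * t ^ 2 with hG
    have hconv : ConvexOn ℝ (Icc 0 s) G := by
      apply convexOn_of_hasDerivWithinAt2_nonneg (f' := fun t => p * t ^ (p - 1) - K * t)
        (f'' := fun t => p * (p - 1) * t ^ (p - 2) - K) (convex_Icc 0 s)
      · exact ((Real.continuous_rpow_const hp0.le).sub
          (continuous_const.mul (continuous_pow 2))).continuousOn
      · intro x hx
        rw [interior_Icc] at hx
        have h1 : HasDerivAt (fun t : ℝ => t ^ p) (p * x ^ (p - 1)) x :=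
          Real.hasDerivAt_rpow_const (Or.inl hx.1.ne')
        have h2 : HasDerivAt (fun t : ℝ => K / 2 * t ^ 2) (K / 2 * (2 * x ^ 1)) x :=
          (hasDerivAt_pow 2 x).const_mul _
        have := (h1.sub h2).hasDerivWithinAt (s := interior (Icc 0 s))
        refine this.congr_deriv ?_
        ring
      · intro x hx
        rw [interior_Icc] at hx
        have h1 : HasDerivAt (fun t : ℝ => p * t ^ (p - 1)) (p * ((p - 1) * x ^ (p - 1 - 1))) x :=
          (Real.hasDerivAt_rpow_const (Or.inl hx.1.ne')).const_mul p
        have h2 : HasDerivAt (fun t : ℝ => K * t) (K * 1) x := (hasDerivAt_id x).const_mul K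
        have := (h1.sub h2).hasDerivWithinAt (s := interior (Icc 0 s))
        refine this.congr_deriv ?_
        rw [show p - 1 - 1 = p - 2 by ring]
        ring
      · intro x hx
        rw [interior_Icc] at hx
        have hle : s ^ (p - 2) ≤ x ^ (p - 2) :=
          Real.rpow_le_rpow_of_nonpos hx.1 hx.2.le (by linarith)
        have : K ≤ p * (p - 1) * x ^ (p - 2) := by
          rw [hK]
          apply mul_le_mul_of_nonneg_left hle (by nlinarith)
        linarith
    have hmema : a ∈ Icc (0:ℝ) s := ⟨ha, by simp [hsdef]; linarith⟩
    have hmemb : b ∈ Icc (0:ℝ) s := ⟨hb, by simp [hsdef]; linarith⟩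
    have hmid := hconv.2 hmema hmemb (by norm_num : (0:ℝ) ≤ 1/2)
      (by norm_num : (0:ℝ) ≤ 1/2) (by norm_num)
    simp only [smul_eq_mul, hG] at hmid
    have hmid' : ((a + b)/2) ^ p - K / 2 * ((a + b)/2) ^ 2
        ≤ 1/2 * (a ^ p - K/2 * a ^ 2) + 1/2 * (b ^ p - K/2 * b ^ 2) := by
      have : (1:ℝ)/2 * a + 1/2 * b = (a + b)/2 := by ring
      rwa [this] at hmid
    rw [hK] at hmid'
    nlinarith [hmid']

private lemma real_holder_pointwise {p a b : ℝ} (hp1 : 1 < p) (hp2 : p < 2) (ha : 0 ≤ a)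
    (hb : 0 ≤ b) :
    |a - b| ^ p ≤ ((a - b) ^ 2 * (a + b) ^ (p - 2)) ^ (p / 2) * ((a + b) ^ p) ^ ((2 - p) / 2) := by
  have hp0 : (0:ℝ) < p := by linarith
  rcases eq_or_lt_of_le (by positivity : (0:ℝ) ≤ a + b) with hs | hs
  · have ha0 : a = 0 := by linarith
    have hb0 : b = 0 := by linarith
    have h1 : |a - b| ^ p = 0 := by
      rw [ha0, hb0]; simp [Real.zero_rpow hp0.ne']
    rw [h1]
    have h2 : (0:ℝ) ≤ (a - b) ^ 2 * (a + b) ^ (p - 2) :=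
      mul_nonneg (sq_nonneg _) (Real.rpow_nonneg (by positivity) _)
    exact mul_nonneg (Real.rpow_nonneg h2 _) (Real.rpow_nonneg (Real.rpow_nonneg (by positivity) _) _)
  · set s := a + b with hsdef
    have hd0 : (0 : ℝ) ≤ |a - b| := abs_nonneg _
    have e1 : ((a - b) ^ 2 * s ^ (p - 2)) ^ (p / 2)
        = |a - b| ^ p * s ^ ((p - 2) * (p / 2)) := by
      rw [← sq_abs, Real.mul_rpow (by positivity) (Real.rpow_nonneg hs.le _),
        ← Real.rpow_natCast |a - b| 2, ← Real.rpow_mul hd0, ← Real.rpow_mul hs.le,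
        show ((2:ℕ):ℝ) * (p/2) = p by push_cast; ring]
    have e2 : ((s:ℝ) ^ p) ^ ((2 - p) / 2) = s ^ (p * ((2 - p) / 2)) := by
      rw [← Real.rpow_mul hs.le]
    rw [e1, e2, mul_assoc, ← Real.rpow_add hs,
      show (p - 2) * (p / 2) + p * ((2 - p) / 2) = 0 by ring, Real.rpow_zero, mul_one]

private lemma key_estimate {X : Type*} [MeasurableSpace X] (m : MeasureTheory.Measure X)
    {p : ℝ} (hp : 1 < p) {E : ℝ≥0∞} (hE : E ≠ ∞) {ε : ℝ≥0∞} (hε : 0 < ε) :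
    ∃ δ : ℝ≥0∞, 0 < δ ∧ δ ≠ ∞ ∧ ∀ g₁ g₂ : X → ℝ, Measurable g₁ → Measurable g₂ →
      (∀ x, 0 ≤ g₁ x) → (∀ x, 0 ≤ g₂ x) →
      (E ≤ ∫⁻ x, ENNReal.ofReal (((g₁ x + g₂ x) / 2) ^ p) ∂m) →
      (∫⁻ x, ENNReal.ofReal (g₁ x ^ p) ∂m) ≤ E + δ →
      (∫⁻ x, ENNReal.ofReal (g₂ x ^ p) ∂m) ≤ E + δ →
      ∫⁻ x, ENNReal.ofReal (|g₁ x - g₂ x| ^ p) ∂m ≤ ε := by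
  have hp0 : (0:ℝ) < p := by linarith
  rcases le_or_gt 2 p with h2 | h2
  · -- case 2 ≤ p
    refine ⟨min 1 (ε / ENNReal.ofReal (2 ^ p)), ?_, ?_, ?_⟩
    · exact lt_min zero_lt_one (ENNReal.div_pos hε.ne' ENNReal.ofReal_ne_top)
    · exact (min_le_left _ _).trans_lt ENNReal.one_lt_top |>.ne
    intro g₁ g₂ hm₁ hm₂ h0₁ h0₂ hmid hI₁ hI₂
    set δ := min 1 (ε / ENNReal.ofReal (2 ^ p)) with hδ
    set d := fun x => |g₁ x - g₂ x| with hd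
    have meas_d : Measurable d := (hm₁.sub hm₂).abs
    have measA : Measurable fun x => ENNReal.ofReal ((d x / 2) ^ p) :=
      ((meas_d.div_const 2).pow measurable_const).ennreal_ofReal
    have meas1p : Measurable fun x => ENNReal.ofReal (g₁ x ^ p) :=
      (hm₁.pow measurable_const).ennreal_ofReal
    set A := ∫⁻ x, ENNReal.ofReal ((d x / 2) ^ p) ∂m with hA
    have step1 : A + (∫⁻ x, ENNReal.ofReal (((g₁ x + g₂ x) / 2) ^ p) ∂m)
        ≤ ((∫⁻ x, ENNReal.ofReal (g₁ x ^ p) ∂m) + ∫⁻ x, ENNReal.ofReal (g₂ x ^ p) ∂m) / 2 := by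
      rw [← lintegral_add_left measA]
      have hpt : ∀ x, ENNReal.ofReal ((d x / 2) ^ p) + ENNReal.ofReal (((g₁ x + g₂ x) / 2) ^ p)
          ≤ (ENNReal.ofReal (g₁ x ^ p) + ENNReal.ofReal (g₂ x ^ p)) / 2 := by
        intro x
        rw [← ENNReal.ofReal_add (Real.rpow_nonneg (by positivity) _)
            (Real.rpow_nonneg (div_nonneg (add_nonneg (h0₁ x) (h0₂ x)) two_pos.le) _),
          ← ENNReal.ofReal_add (Real.rpow_nonneg (h0₁ x) _) (Real.rpow_nonneg (h0₂ x) _),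
          ← ENNReal.ofReal_ofNat 2, ← ENNReal.ofReal_div_of_pos two_pos]
        exact ENNReal.ofReal_le_ofReal (real_clarkson h2 (h0₁ x) (h0₂ x))
      calc ∫⁻ x, (ENNReal.ofReal ((d x / 2) ^ p) + ENNReal.ofReal (((g₁ x + g₂ x) / 2) ^ p)) ∂m
          ≤ ∫⁻ x, (ENNReal.ofReal (g₁ x ^ p) + ENNReal.ofReal (g₂ x ^ p)) / 2 ∂m :=
            lintegral_mono hpt
        _ = _ := by
            simp_rw [div_eq_mul_inv]
            rw [lintegral_mul_const _ (f := fun x => ENNReal.ofReal (g₁ x ^ p) + ENNReal.ofReal (g₂ x ^ p)) (meas1p.add ((hm₂.pow measurable_const).ennreal_ofReal)),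
              lintegral_add_left meas1p]
    have step2 : A ≤ δ := by
      have hδtop : δ ≠ ∞ := (min_le_left _ _).trans_lt ENNReal.one_lt_top |>.ne
      have h3 : A + E ≤ δ + E := by
        calc A + E ≤ A + ∫⁻ x, ENNReal.ofReal (((g₁ x + g₂ x) / 2) ^ p) ∂m :=
              add_le_add_right hmid A
          _ ≤ ((∫⁻ x, ENNReal.ofReal (g₁ x ^ p) ∂m) + ∫⁻ x, ENNReal.ofReal (g₂ x ^ p) ∂m) / 2 :=
              step1
          _ ≤ ((E + δ) + (E + δ)) / 2 := by gcongr
          _ = δ + E := by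
              rw [← two_mul, mul_div_assoc,
                ENNReal.mul_div_cancel' (by norm_num) (by norm_num), add_comm]
      exact (ENNReal.add_le_add_iff_right hE).1 h3
    calc ∫⁻ x, ENNReal.ofReal (|g₁ x - g₂ x| ^ p) ∂m
        = ∫⁻ x, ENNReal.ofReal (2 ^ p) * ENNReal.ofReal ((d x / 2) ^ p) ∂m := by
          apply lintegral_congr
          intro x
          rw [← ENNReal.ofReal_mul (by positivity)]
          congr 1
          rw [Real.div_rpow (abs_nonneg _) (by norm_num : (0:ℝ) ≤ 2),
            mul_div_cancel₀ _ (Real.rpow_pos_of_pos two_pos p).ne']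
      _ = ENNReal.ofReal (2 ^ p) * A := lintegral_const_mul _ measA
      _ ≤ ENNReal.ofReal (2 ^ p) * (ε / ENNReal.ofReal (2 ^ p)) := by
          exact mul_le_mul_right (step2.trans (min_le_right _ _)) _
      _ ≤ ε := ENNReal.mul_div_le
  · -- case p < 2
    have hc : (0:ℝ) < p * (p - 1) / 8 := by nlinarith
    set c := p * (p - 1) / 8 with hcdef
    set C : ℝ≥0∞ := ENNReal.ofReal (2 ^ (p - 1)) * (2 * (E + 1)) with hC
    have hC_ne : C ≠ ∞ := by
      rw [hC]
      exact ENNReal.mul_ne_top ENNReal.ofReal_ne_top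
        (ENNReal.mul_ne_top (by norm_num) (ENNReal.add_ne_top.2 ⟨hE, by norm_num⟩))
    set C' := C ^ ((2 - p) / 2) with hC'
    have hC'_ne : C' ≠ ∞ := ENNReal.rpow_ne_top_of_nonneg (by linarith) hC_ne
    set R := (min 1 (ε / C')) ^ (2 / p) with hR
    have hbase_pos : 0 < min 1 (ε / C') := lt_min zero_lt_one (ENNReal.div_pos hε.ne' hC'_ne)
    have hbase_ne : min 1 (ε / C') ≠ ∞ := ((min_le_left _ _).trans_lt ENNReal.one_lt_top).ne
    have hR_pos : 0 < R := ENNReal.rpow_pos hbase_pos hbase_ne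
    have hoc_ne : ENNReal.ofReal c ≠ 0 := (ENNReal.ofReal_pos.2 hc).ne'
    refine ⟨min 1 (ENNReal.ofReal c * R), lt_min zero_lt_one
      (ENNReal.mul_pos hoc_ne hR_pos.ne'), ((min_le_left _ _).trans_lt ENNReal.one_lt_top).ne, ?_⟩
    intro g₁ g₂ hm₁ hm₂ h0₁ h0₂ hmid hI₁ hI₂
    set δ := min 1 (ENNReal.ofReal c * R) with hδ
    have hδ1 : δ ≤ 1 := min_le_left _ _
    set qf := fun x => (g₁ x - g₂ x) ^ 2 * (g₁ x + g₂ x) ^ (p - 2) with hqf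
    have hqf0 : ∀ x, 0 ≤ qf x := fun x =>
      mul_nonneg (sq_nonneg _) (Real.rpow_nonneg (add_nonneg (h0₁ x) (h0₂ x)) _)
    have meas_qf : Measurable qf :=
      ((hm₁.sub hm₂).pow_const 2).mul ((hm₁.add hm₂).pow measurable_const)
    have meas_cq : Measurable fun x => ENNReal.ofReal (c * qf x) :=
      (measurable_const.mul meas_qf).ennreal_ofReal
    have meas1p : Measurable fun x => ENNReal.ofReal (g₁ x ^ p) :=
      (hm₁.pow measurable_const).ennreal_ofReal
    set Q := ∫⁻ x, ENNReal.ofReal (qf x) ∂m with hQdef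
    have step1 : (∫⁻ x, ENNReal.ofReal (c * qf x) ∂m)
        + (∫⁻ x, ENNReal.ofReal (((g₁ x + g₂ x) / 2) ^ p) ∂m)
        ≤ ((∫⁻ x, ENNReal.ofReal (g₁ x ^ p) ∂m) + ∫⁻ x, ENNReal.ofReal (g₂ x ^ p) ∂m) / 2 := by
      rw [← lintegral_add_left meas_cq]
      have hpt : ∀ x, ENNReal.ofReal (c * qf x) + ENNReal.ofReal (((g₁ x + g₂ x) / 2) ^ p)
          ≤ (ENNReal.ofReal (g₁ x ^ p) + ENNReal.ofReal (g₂ x ^ p)) / 2 := by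
        intro x
        rw [← ENNReal.ofReal_add (mul_nonneg hc.le (hqf0 x))
            (Real.rpow_nonneg (div_nonneg (add_nonneg (h0₁ x) (h0₂ x)) two_pos.le) _),
          ← ENNReal.ofReal_add (Real.rpow_nonneg (h0₁ x) _) (Real.rpow_nonneg (h0₂ x) _),
          ← ENNReal.ofReal_ofNat 2, ← ENNReal.ofReal_div_of_pos two_pos]
        exact ENNReal.ofReal_le_ofReal (by
          have := real_strong_convex hp h2.le (h0₁ x) (h0₂ x)
          rw [hcdef]; rw [hqf]; simpa using this)
      calc ∫⁻ x, (ENNReal.ofReal (c * qf x) + ENNReal.ofReal (((g₁ x + g₂ x) / 2) ^ p)) ∂m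
          ≤ ∫⁻ x, (ENNReal.ofReal (g₁ x ^ p) + ENNReal.ofReal (g₂ x ^ p)) / 2 ∂m :=
            lintegral_mono hpt
        _ = _ := by
            simp_rw [div_eq_mul_inv]
            rw [lintegral_mul_const _ (f := fun x => ENNReal.ofReal (g₁ x ^ p) + ENNReal.ofReal (g₂ x ^ p)) (meas1p.add ((hm₂.pow measurable_const).ennreal_ofReal)),
              lintegral_add_left meas1p]
    have step2 : ENNReal.ofReal c * Q ≤ δ := by
      have hcQ : ∫⁻ x, ENNReal.ofReal (c * qf x) ∂m = ENNReal.ofReal c * Q := by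
        rw [hQdef, ← lintegral_const_mul _ (meas_qf.ennreal_ofReal)]
        exact lintegral_congr fun x => ENNReal.ofReal_mul hc.le
      have h3 : ENNReal.ofReal c * Q + E ≤ δ + E := by
        calc ENNReal.ofReal c * Q + E
            ≤ ENNReal.ofReal c * Q + ∫⁻ x, ENNReal.ofReal (((g₁ x + g₂ x) / 2) ^ p) ∂m :=
              add_le_add_right hmid _
          _ ≤ ((∫⁻ x, ENNReal.ofReal (g₁ x ^ p) ∂m) + ∫⁻ x, ENNReal.ofReal (g₂ x ^ p) ∂m) / 2 := by
              rw [← hcQ]; exact step1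
          _ ≤ ((E + δ) + (E + δ)) / 2 := by gcongr
          _ = δ + E := by
              rw [← two_mul, mul_div_assoc,
                ENNReal.mul_div_cancel' (by norm_num) (by norm_num), add_comm]
      exact (ENNReal.add_le_add_iff_right hE).1 h3
    have hQle : Q ≤ R := by
      calc Q = (ENNReal.ofReal c)⁻¹ * (ENNReal.ofReal c * Q) := by
            rw [← mul_assoc, ENNReal.inv_mul_cancel hoc_ne ENNReal.ofReal_ne_top, one_mul]
        _ ≤ (ENNReal.ofReal c)⁻¹ * δ := mul_le_mul_right step2 _
        _ ≤ (ENNReal.ofReal c)⁻¹ * (ENNReal.ofReal c * R) := mul_le_mul_right (min_le_right _ _) _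
        _ = R := by
            rw [← mul_assoc, ENNReal.inv_mul_cancel hoc_ne ENNReal.ofReal_ne_top, one_mul]
    have measS : Measurable fun x => ENNReal.ofReal ((g₁ x + g₂ x) ^ p) :=
      ((hm₁.add hm₂).pow measurable_const).ennreal_ofReal
    set M := ∫⁻ x, ENNReal.ofReal ((g₁ x + g₂ x) ^ p) ∂m with hM
    have hMC : M ≤ C := by
      have hpt : ∀ x, ENNReal.ofReal ((g₁ x + g₂ x) ^ p)
          ≤ ENNReal.ofReal (2 ^ (p - 1)) * (ENNReal.ofReal (g₁ x ^ p) + ENNReal.ofReal (g₂ x ^ p)) := by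
        intro x
        rw [← ENNReal.ofReal_add (Real.rpow_nonneg (h0₁ x) _) (Real.rpow_nonneg (h0₂ x) _),
          ← ENNReal.ofReal_mul (by positivity)]
        apply ENNReal.ofReal_le_ofReal
        have h1 : ((g₁ x + g₂ x) / 2) ^ p ≤ (g₁ x ^ p + g₂ x ^ p) / 2 :=
          midpoint_rpow_le hp.le (h0₁ x) (h0₂ x)
        have h2' : (g₁ x + g₂ x) ^ p = 2 ^ p * (((g₁ x + g₂ x) / 2) ^ p) := by
          rw [Real.div_rpow (add_nonneg (h0₁ x) (h0₂ x)) (by norm_num : (0:ℝ) ≤ 2),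
            mul_div_cancel₀ _ (Real.rpow_pos_of_pos two_pos p).ne']
        rw [h2']
        calc 2 ^ p * (((g₁ x + g₂ x) / 2) ^ p) ≤ 2 ^ p * ((g₁ x ^ p + g₂ x ^ p) / 2) := by
              apply mul_le_mul_of_nonneg_left h1 (Real.rpow_nonneg (by norm_num) _)
          _ = 2 ^ (p - 1) * (g₁ x ^ p + g₂ x ^ p) := by
              rw [Real.rpow_sub two_pos, Real.rpow_one]; ring
      calc M ≤ ∫⁻ x, ENNReal.ofReal (2 ^ (p - 1))
            * (ENNReal.ofReal (g₁ x ^ p) + ENNReal.ofReal (g₂ x ^ p)) ∂m := lintegral_mono hpt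
        _ = ENNReal.ofReal (2 ^ (p - 1))
            * ((∫⁻ x, ENNReal.ofReal (g₁ x ^ p) ∂m) + ∫⁻ x, ENNReal.ofReal (g₂ x ^ p) ∂m) := by
            rw [lintegral_const_mul _ (f := fun x => ENNReal.ofReal (g₁ x ^ p) + ENNReal.ofReal (g₂ x ^ p)) (meas1p.add ((hm₂.pow measurable_const).ennreal_ofReal)),
              lintegral_add_left meas1p]
        _ ≤ ENNReal.ofReal (2 ^ (p - 1)) * (2 * (E + 1)) := by
            apply mul_le_mul_right
            calc (∫⁻ x, ENNReal.ofReal (g₁ x ^ p) ∂m) + ∫⁻ x, ENNReal.ofReal (g₂ x ^ p) ∂m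
                ≤ (E + δ) + (E + δ) := add_le_add hI₁ hI₂
              _ ≤ (E + 1) + (E + 1) := by gcongr
              _ = 2 * (E + 1) := (two_mul _).symm
        _ = C := hC.symm
    have hconj : Real.HolderConjugate (2 / p) (2 / (2 - p)) := by
      rw [Real.holderConjugate_iff]
      constructor
      · exact (one_lt_div hp0).2 h2
      · rw [inv_div, inv_div, ← add_div]
        norm_num
    have holder := ENNReal.lintegral_mul_le_Lp_mul_Lq m hconj
      (f := fun x => (ENNReal.ofReal (qf x)) ^ (p / 2))
      (g := fun x => (ENNReal.ofReal ((g₁ x + g₂ x) ^ p)) ^ ((2 - p) / 2))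
      ((meas_qf.ennreal_ofReal.pow measurable_const).aemeasurable)
      ((measS.pow measurable_const).aemeasurable)
    have exp1 : ∀ x : ℝ≥0∞, (x ^ (p / 2)) ^ (2 / p) = x := by
      intro x
      rw [← ENNReal.rpow_mul, show p / 2 * (2 / p) = 1 by field_simp, ENNReal.rpow_one]
    have exp2 : ∀ x : ℝ≥0∞, (x ^ ((2 - p) / 2)) ^ (2 / (2 - p)) = x := by
      intro x
      have h2p : (2:ℝ) - p ≠ 0 := by linarith
      rw [← ENNReal.rpow_mul, show (2 - p) / 2 * (2 / (2 - p)) = 1 by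
        field_simp, ENNReal.rpow_one]
    rw [show (1 : ℝ) / (2 / p) = p / 2 by rw [one_div_div],
      show (1 : ℝ) / (2 / (2 - p)) = (2 - p) / 2 by rw [one_div_div]] at holder
    simp_rw [Pi.mul_apply, exp1, exp2] at holder
    calc ∫⁻ x, ENNReal.ofReal (|g₁ x - g₂ x| ^ p) ∂m
        ≤ ∫⁻ x, (ENNReal.ofReal (qf x)) ^ (p / 2)
            * (ENNReal.ofReal ((g₁ x + g₂ x) ^ p)) ^ ((2 - p) / 2) ∂m := by
          apply lintegral_mono
          intro x
          calc ENNReal.ofReal (|g₁ x - g₂ x| ^ p)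
              ≤ ENNReal.ofReal (qf x ^ (p / 2) * ((g₁ x + g₂ x) ^ p) ^ ((2 - p) / 2)) :=
                ENNReal.ofReal_le_ofReal (real_holder_pointwise hp h2 (h0₁ x) (h0₂ x))
            _ = (ENNReal.ofReal (qf x)) ^ (p / 2)
                * (ENNReal.ofReal ((g₁ x + g₂ x) ^ p)) ^ ((2 - p) / 2) := by
                rw [ENNReal.ofReal_mul (Real.rpow_nonneg (hqf0 x) _),
                  ENNReal.ofReal_rpow_of_nonneg (hqf0 x) (by linarith : (0:ℝ) ≤ p / 2),
                  ENNReal.ofReal_rpow_of_nonneg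
                    (Real.rpow_nonneg (add_nonneg (h0₁ x) (h0₂ x)) _)
                    (by linarith : (0:ℝ) ≤ (2 - p) / 2)]
      _ ≤ Q ^ (p / 2) * M ^ ((2 - p) / 2) := holder
      _ ≤ R ^ (p / 2) * C' := by
          apply mul_le_mul'
          · exact ENNReal.rpow_le_rpow hQle (by positivity)
          · rw [hC']; exact ENNReal.rpow_le_rpow hMC (by linarith)
      _ = min 1 (ε / C') * C' := by
          rw [hR, ← ENNReal.rpow_mul, show 2 / p * (p / 2) = 1 by field_simp, ENNReal.rpow_one]
      _ ≤ C' * (ε / C') := by rw [mul_comm]; exact mul_le_mul_right (min_le_right _ _) _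
      _ ≤ ε := ENNReal.mul_div_le


private lemma lpIntOn_eq_ofReal_rpow {X : Type*} [MeasurableSpace X] (m : MeasureTheory.Measure X)
    {p : ℝ} (hp : 0 < p) {f : X → ℝ} (hf : ∀ x, 0 ≤ f x) :
    AxSob.lpIntOn m p f Set.univ = ∫⁻ x, ENNReal.ofReal (f x ^ p) ∂m := by
  rw [AxSob.lpIntOn, Measure.restrict_univ]
  exact lintegral_congr fun x => by
    rw [abs_of_nonneg (hf x), ENNReal.ofReal_rpow_of_nonneg (hf x) hp.le]

private lemma lpIntOn_eq_eLpNorm {X : Type*} [MeasurableSpace X] (m : MeasureTheory.Measure X)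
    {p : ℝ} (hp : 0 < p) (f : X → ℝ) :
    AxSob.lpIntOn m p f Set.univ = eLpNorm f (ENNReal.ofReal p) m ^ p := by
  rw [eLpNorm_eq_lintegral_rpow_enorm_toReal (ENNReal.ofReal_pos.2 hp).ne' ENNReal.ofReal_ne_top,
    ENNReal.toReal_ofReal hp.le, ← ENNReal.rpow_mul, one_div_mul_cancel hp.ne',
    ENNReal.rpow_one, AxSob.lpIntOn, Measure.restrict_univ]
  exact lintegral_congr fun x => by rw [Real.enorm_eq_ofReal_abs]

open AxSob AxSob.DStructure

/-- Existence and (`m`-a.e.) uniqueness of the minimal pseudo-gradient of a function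
`u ∈ S^p(X)`, for `p ∈ (1,∞)`. -/
theorem exists_unique_minimal_pseudo_gradient {X : Type*} [MetricSpace X] [CompleteSpace X]
    [TopologicalSpace.SeparableSpace X] [MeasurableSpace X] [BorelSpace X]
    (m : MeasureTheory.Measure X) (hm : m ≠ 0)
    (hball : ∀ (x : X) (r : ℝ), m (Metric.ball x r) < ∞)
    (p : ℝ) (hp : 1 < p) (S : DStructure X m p)
    (u : X → ℝ) (hu : u ∈ S.SobolevClass) :
    ∃ g : X → ℝ, S.IsMinimalPG u g ∧
      ∀ g' : X → ℝ, S.IsMinimalPG u g' → g' =ᵐ[m] g := by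
  classical
  obtain ⟨hu_loc, hE_fin⟩ := hu
  have hp0 : (0:ℝ) < p := by linarith
  have hE_ne : S.energy u ≠ ∞ := hE_fin.ne
  set q : ℝ≥0∞ := ENNReal.ofReal p with hq
  have hq1 : 1 ≤ q := by rw [hq]; exact ENNReal.one_le_ofReal.2 hp.le
  have hE_le : ∀ g, g ∈ S.D u → S.energy u ≤ AxSob.lpIntOn m p g Set.univ := by
    intro g hg
    exact iInf₂_le g hg
  have mid_mem : ∀ g₁ g₂, g₁ ∈ S.D u → g₂ ∈ S.D u →
      (fun x => (g₁ x + g₂ x) / 2) ∈ S.D u := by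
    intro g₁ g₂ h₁ h₂
    have hmeas : Measurable fun x => (g₁ x + g₂ x) / 2 :=
      ((S.measurable_of_mem u g₁ h₁).add (S.measurable_of_mem u g₂ h₂)).div_const 2
    have hnn : (0 : X → ℝ) ≤ fun x => (g₁ x + g₂ x) / 2 := fun x =>
      div_nonneg (add_nonneg (S.nonneg_of_mem u g₁ h₁ x) (S.nonneg_of_mem u g₂ h₂ x)) two_pos.le
    have h := S.axiomA2 u u g₁ g₂ (fun x => (g₁ x + g₂ x) / 2) (1/2) (1/2) hu_loc hu_loc h₁ h₂
      hmeas hnn (Filter.Eventually.of_forall fun x => by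
        rw [abs_of_pos (by norm_num : (0:ℝ) < 1/2)]
        exact le_of_eq (by ring))
    rwa [show (fun x => 1/2 * u x + 1/2 * u x) = u from funext fun x => by ring] at h
  have hmid_bound : ∀ g₁ g₂, g₁ ∈ S.D u → g₂ ∈ S.D u →
      S.energy u ≤ ∫⁻ x, ENNReal.ofReal (((g₁ x + g₂ x) / 2) ^ p) ∂m := by
    intro g₁ g₂ h₁ h₂
    have h := hE_le _ (mid_mem g₁ g₂ h₁ h₂)
    rwa [lpIntOn_eq_ofReal_rpow m hp0 (fun x =>
      div_nonneg (add_nonneg (S.nonneg_of_mem u g₁ h₁ x) (S.nonneg_of_mem u g₂ h₂ x))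
        two_pos.le)] at h
  -- quantitative moduli from the key estimate
  have hεpos : ∀ N : ℕ, (0:ℝ≥0∞) < ((2:ℝ≥0∞)⁻¹ ^ (N+1)) ^ p := fun N =>
    ENNReal.rpow_pos (pos_iff_ne_zero.2 (pow_ne_zero _ (by norm_num)))
      (ENNReal.pow_ne_top (by norm_num))
  choose δ hδpos hδne hδkey using fun N : ℕ => key_estimate m hp hE_ne (hεpos N)
  set η : ℕ → ℝ≥0∞ := fun N => min ((Finset.range (N+1)).inf δ) (((N+1 : ℕ) : ℝ≥0∞))⁻¹ with hη
  have hηpos : ∀ N, 0 < η N := fun N => lt_min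
    ((Finset.lt_inf_iff (by norm_num : (0:ℝ≥0∞) < ⊤)).2 fun b _ => hδpos b)
    (ENNReal.inv_pos.2 (ENNReal.natCast_ne_top _))
  have hη_le_δ : ∀ N n, N ≤ n → η n ≤ δ N := fun N n h =>
    (min_le_left _ _).trans (Finset.inf_le (Finset.mem_range.2 (Nat.lt_succ_of_le h)))
  have hη_le_inv : ∀ N, η N ≤ (((N+1 : ℕ) : ℝ≥0∞))⁻¹ := fun N => min_le_right _ _
  have hη_ne : ∀ N, η N ≠ ∞ := fun N =>
    ((hη_le_inv N).trans_lt (ENNReal.inv_lt_top.2 (by exact_mod_cast Nat.succ_pos N))).ne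
  -- minimizing sequence
  have hex : ∀ N : ℕ, ∃ g, g ∈ S.D u ∧ AxSob.lpIntOn m p g Set.univ < S.energy u + η N := by
    intro N
    have hlt : (⨅ (g : X → ℝ) (_ : g ∈ S.D u), AxSob.lpIntOn m p g Set.univ)
        < S.energy u + η N := by
      have : S.energy u < S.energy u + η N := ENNReal.lt_add_right hE_ne (hηpos N).ne'
      exact this
    obtain ⟨g, hg⟩ := iInf_lt_iff.1 hlt
    obtain ⟨hgmem, hglt⟩ := iInf_lt_iff.1 hg
    exact ⟨g, hgmem, hglt⟩
  choose gs hgsD hgsI using hex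
  have hgs_meas : ∀ N, Measurable (gs N) := fun N => S.measurable_of_mem u _ (hgsD N)
  have hgs_nn : ∀ N x, 0 ≤ gs N x := fun N x => S.nonneg_of_mem u _ (hgsD N) x
  have hgsE : ∀ N, S.energy u ≤ AxSob.lpIntOn m p (gs N) Set.univ := fun N => hE_le _ (hgsD N)
  have hgs_fin : ∀ N, AxSob.lpIntOn m p (gs N) Set.univ < ∞ := fun N =>
    (hgsI N).trans (ENNReal.add_lt_top.2 ⟨hE_fin, (hη_ne N).lt_top⟩)
  have hmemLp : ∀ N, MemLp (gs N) q m := by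
    intro N
    refine ⟨(hgs_meas N).aestronglyMeasurable, ?_⟩
    have hfin := hgs_fin N
    rw [lpIntOn_eq_eLpNorm m hp0, ← hq] at hfin
    by_contra hcon
    rw [not_lt, top_le_iff] at hcon
    rw [hcon, ENNReal.top_rpow_of_pos hp0] at hfin
    exact absurd hfin (lt_irrefl _)
  -- Cauchy in L^p
  have h_cau : ∀ N n n' : ℕ, N ≤ n → N ≤ n' →
      eLpNorm (gs n - gs n') q m < (2:ℝ≥0∞)⁻¹ ^ N := by
    intro N n n' hn hn'
    have key := hδkey N (gs n) (gs n') (hgs_meas n) (hgs_meas n') (hgs_nn n) (hgs_nn n')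
      (hmid_bound _ _ (hgsD n) (hgsD n'))
      (by rw [← lpIntOn_eq_ofReal_rpow m hp0 (hgs_nn n)]
          exact (hgsI n).le.trans (add_le_add_right (hη_le_δ N n hn) _))
      (by rw [← lpIntOn_eq_ofReal_rpow m hp0 (hgs_nn n')]
          exact (hgsI n').le.trans (add_le_add_right (hη_le_δ N n' hn') _))
    have h1 : AxSob.lpIntOn m p (fun x => gs n x - gs n' x) Set.univ
        ≤ ((2:ℝ≥0∞)⁻¹ ^ (N+1)) ^ p := by
      rw [AxSob.lpIntOn, Measure.restrict_univ]
      refine le_trans (le_of_eq (lintegral_congr fun x => ?_)) key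
      rw [ENNReal.ofReal_rpow_of_nonneg (abs_nonneg _) hp0.le]
    rw [lpIntOn_eq_eLpNorm m hp0, ← hq] at h1
    have h2 : eLpNorm (fun x => gs n x - gs n' x) q m ≤ (2:ℝ≥0∞)⁻¹ ^ (N+1) := by
      have h3 := ENNReal.rpow_le_rpow h1 (by positivity : (0:ℝ) ≤ 1/p)
      rwa [← ENNReal.rpow_mul, ← ENNReal.rpow_mul, mul_one_div_cancel hp0.ne',
        ENNReal.rpow_one, ENNReal.rpow_one] at h3
    have h4 : eLpNorm (gs n - gs n') q m = eLpNorm (fun x => gs n x - gs n' x) q m := rfl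
    rw [h4]
    refine h2.trans_lt ?_
    calc (2:ℝ≥0∞)⁻¹ ^ (N+1) = (2:ℝ≥0∞)⁻¹ ^ N * 2⁻¹ := pow_succ _ _
      _ < (2:ℝ≥0∞)⁻¹ ^ N * 1 := by
          exact ENNReal.mul_lt_mul_right (pow_ne_zero _ (by norm_num))
            (ENNReal.pow_ne_top (by norm_num)) (by norm_num)
      _ = (2:ℝ≥0∞)⁻¹ ^ N := mul_one _
  have hB_sum : (∑' N : ℕ, (2:ℝ≥0∞)⁻¹ ^ N) ≠ ∞ := by
    rw [ENNReal.tsum_geometric, ENNReal.one_sub_inv_two, inv_inv]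
    norm_num
  obtain ⟨flim, hflim_mem, hflim_tendsto⟩ := MeasureTheory.Lp.cauchy_complete_eLpNorm hq1 hmemLp hB_sum h_cau
  obtain ⟨f₀, hf₀_sm, hf₀_ae⟩ := hflim_mem.1
  set g₀ : X → ℝ := fun x => max (f₀ x) 0 with hg₀def
  have hg₀_meas : Measurable g₀ := hf₀_sm.measurable.max measurable_const
  have hg₀nn : ∀ x, 0 ≤ g₀ x := fun x => le_max_right _ _
  have hcomp : ∀ n, eLpNorm (fun x => gs n x - g₀ x) q m ≤ eLpNorm (gs n - flim) q m := by
    intro n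
    apply eLpNorm_mono_ae
    filter_upwards [hf₀_ae] with x hx
    rw [Real.norm_eq_abs, Real.norm_eq_abs, Pi.sub_apply, hx]
    calc |gs n x - g₀ x| = |max (gs n x) 0 - max (f₀ x) 0| := by
          rw [hg₀def]; rw [max_eq_left (hgs_nn n x)]
      _ ≤ |gs n x - f₀ x| := abs_max_sub_max_le_abs _ _ _
  have hg₀_tend : Tendsto (fun n => eLpNorm (fun x => gs n x - g₀ x) q m) atTop (𝓝 0) :=
    tendsto_of_tendsto_of_tendsto_of_le_of_le tendsto_const_nhds hflim_tendsto
      (fun n => zero_le) hcomp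
  have hg₀_tendI : Tendsto (fun n => AxSob.lpIntOn m p (fun x => gs n x - g₀ x) Set.univ)
      atTop (𝓝 0) := by
    have hcont : Tendsto (fun z : ℝ≥0∞ => z ^ p) (𝓝 0) (𝓝 0) := by
      have h := (ENNReal.continuous_rpow_const (y := p)).tendsto 0
      rwa [ENNReal.zero_rpow_of_pos hp0] at h
    refine (hcont.comp hg₀_tend).congr fun n => ?_
    rw [Function.comp_apply, lpIntOn_eq_eLpNorm m hp0, ← hq]
  have hg₀D : g₀ ∈ S.D u := by
    apply S.axiomA5 (fun _ => u) gs u g₀ (fun _ => hu_loc) hgsD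
      (fun n => ⟨hgs_meas n, hgs_fin n⟩) hu_loc hg₀_meas hg₀nn ?_ hg₀_tendI
    intro Bset hBm hBb
    refine Filter.Tendsto.congr (fun n => ?_) tendsto_const_nhds
    refine Eq.symm ?_
    rw [AxSob.lpIntOn]
    simp [ENNReal.zero_rpow_of_pos hp0]
  -- the limit attains the energy
  have hIn_tend : Tendsto (fun n => AxSob.lpIntOn m p (gs n) Set.univ) atTop (𝓝 (S.energy u)) := by
    have h1 : Tendsto (fun n : ℕ => (((n+1 : ℕ) : ℝ≥0∞))⁻¹) atTop (𝓝 0) :=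
      ENNReal.tendsto_inv_nat_nhds_zero.comp (tendsto_add_atTop_nat 1)
    have hup : Tendsto (fun n : ℕ => S.energy u + (((n+1 : ℕ) : ℝ≥0∞))⁻¹) atTop
        (𝓝 (S.energy u)) := by
      have h2 := (tendsto_const_nhds :
        Tendsto (fun _ : ℕ => S.energy u) atTop (𝓝 (S.energy u))).add h1
      rwa [add_zero] at h2
    exact tendsto_of_tendsto_of_tendsto_of_le_of_le tendsto_const_nhds hup hgsE
      (fun n => (hgsI n).le.trans (add_le_add_right (hη_le_inv n) _))
  have hnorm_tend : Tendsto (fun n => eLpNorm (gs n) q m) atTop (𝓝 (S.energy u ^ (1/p))) := by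
    have hcont := (ENNReal.continuous_rpow_const (y := 1/p)).tendsto (S.energy u)
    refine (hcont.comp hIn_tend).congr fun n => ?_
    rw [Function.comp_apply, lpIntOn_eq_eLpNorm m hp0, ← hq, ← ENNReal.rpow_mul,
      mul_one_div_cancel hp0.ne', ENNReal.rpow_one]
  have hg₀_le : eLpNorm g₀ q m ≤ S.energy u ^ (1/p) := by
    have hle : ∀ n, eLpNorm g₀ q m
        ≤ eLpNorm (fun x => gs n x - g₀ x) q m + eLpNorm (gs n) q m := by
      intro n
      have heq : g₀ = (fun x => g₀ x - gs n x) + gs n := by funext x; simp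
      calc eLpNorm g₀ q m = eLpNorm ((fun x => g₀ x - gs n x) + gs n) q m := by rw [← heq]
        _ ≤ eLpNorm (fun x => g₀ x - gs n x) q m + eLpNorm (gs n) q m :=
            eLpNorm_add_le (hg₀_meas.sub (hgs_meas n)).aestronglyMeasurable
              (hgs_meas n).aestronglyMeasurable hq1
        _ = eLpNorm (fun x => gs n x - g₀ x) q m + eLpNorm (gs n) q m := by
            rw [show (fun x => g₀ x - gs n x) = -(fun x => gs n x - g₀ x) from
              funext fun x => by simp [neg_sub], eLpNorm_neg]
    have hlim := hg₀_tend.add hnorm_tend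
    rw [zero_add] at hlim
    exact ge_of_tendsto' hlim hle
  have hI₀_eq : AxSob.lpIntOn m p g₀ Set.univ = S.energy u := by
    apply le_antisymm
    · rw [lpIntOn_eq_eLpNorm m hp0, ← hq]
      calc eLpNorm g₀ q m ^ p ≤ (S.energy u ^ (1/p)) ^ p :=
            ENNReal.rpow_le_rpow hg₀_le hp0.le
        _ = S.energy u := by
            rw [← ENNReal.rpow_mul, one_div_mul_cancel hp0.ne', ENNReal.rpow_one]
    · exact hE_le _ hg₀D
  refine ⟨g₀, ⟨hg₀D, ⟨hg₀_meas, ?_⟩, hI₀_eq⟩, ?_⟩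
  · rw [hI₀_eq]; exact hE_fin
  -- uniqueness
  intro g' hg'
  obtain ⟨hg'D, ⟨hg'_meas, hg'_fin⟩, hg'I⟩ := hg'
  have hg'nn : ∀ x, 0 ≤ g' x := fun x => S.nonneg_of_mem u g' hg'D x
  have hzero : ∫⁻ x, ENNReal.ofReal (|g' x - g₀ x| ^ p) ∂m = 0 := by
    have hall : ∀ ε : ℝ≥0∞, 0 < ε → (∫⁻ x, ENNReal.ofReal (|g' x - g₀ x| ^ p) ∂m) ≤ ε := by
      intro ε hε
      obtain ⟨δ', hδ'pos, hδ'ne, hkey⟩ := key_estimate m hp hE_ne hε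
      apply hkey g' g₀ hg'_meas hg₀_meas hg'nn hg₀nn (hmid_bound _ _ hg'D hg₀D)
      · rw [← lpIntOn_eq_ofReal_rpow m hp0 hg'nn, hg'I]
        exact le_self_add
      · rw [← lpIntOn_eq_ofReal_rpow m hp0 hg₀nn, hI₀_eq]
        exact le_self_add
    have hle0 : (∫⁻ x, ENNReal.ofReal (|g' x - g₀ x| ^ p) ∂m) ≤ 0 := by
      refine ENNReal.le_of_forall_pos_le_add fun ε hε _ => ?_
      rw [zero_add]
      exact hall ε (ENNReal.coe_pos.2 hε)
    exact le_antisymm hle0 zero_le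
  have hmeas_int : Measurable fun x => ENNReal.ofReal (|g' x - g₀ x| ^ p) :=
    (((hg'_meas.sub hg₀_meas).abs).pow measurable_const).ennreal_ofReal
  have hae := (lintegral_eq_zero_iff hmeas_int).1 hzero
  filter_upwards [hae] with x hx
  rw [Pi.zero_apply, ENNReal.ofReal_eq_zero] at hx
  have h1 : |g' x - g₀ x| ^ p = 0 :=
    le_antisymm hx (Real.rpow_nonneg (abs_nonneg _) _)
  have h2 : |g' x - g₀ x| = 0 := by
    by_contra hne
    have hpos : 0 < |g' x - g₀ x| := lt_of_le_of_ne (abs_nonneg _) (Ne.symm hne)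
    exact absurd h1 (Real.rpow_pos_of_pos hpos p).ne'
  exact sub_eq_zero.1 (abs_eq_zero.1 h2)
end
end

section
/- Let (X,d,m) be a metric measure space, p ∈ (1,∞), and let D be a D-structure on (X,d,m) satisfying property L3. Then D satisfies property L2; that is, if B ⊆ X is Borel and u ∈ S^p(X) is m-a.e. constant on B, then the minimal pseudo-gradient Du vanishes m-a.e. on B. -/
open Filter Set
open scoped ENNReal NNReal Topology

noncomputable section

open AxSob AxSob.DStructure

section Helpers

open MeasureTheory

variable {X : Type*} [MetricSpace X] [MeasurableSpace X] {m : MeasureTheory.Measure X} {p : ℝ}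

lemma rpow_add_le_two_rpow (a b : ℝ≥0∞) {p : ℝ} (hp : 0 ≤ p) :
    (a + b) ^ p ≤ 2 ^ p * (a ^ p + b ^ p) := by
  calc (a + b) ^ p ≤ (2 * max a b) ^ p := by
        apply ENNReal.rpow_le_rpow _ hp
        rw [two_mul]
        exact add_le_add (le_max_left a b) (le_max_right a b)
    _ = 2 ^ p * max a b ^ p := ENNReal.mul_rpow_of_nonneg _ _ hp
    _ ≤ 2 ^ p * (a ^ p + b ^ p) := by
        gcongr
        rcases le_total a b with h | h
        · rw [max_eq_right h]; exact le_add_self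
        · rw [max_eq_left h]; exact self_le_add_right _ _

lemma lpIntOn_mono_fun (hp : 0 ≤ p) {u v : X → ℝ} (h : ∀ x, |u x| ≤ |v x|) (B : Set X) :
    lpIntOn m p u B ≤ lpIntOn m p v B := by
  refine MeasureTheory.lintegral_mono fun x => ?_
  exact ENNReal.rpow_le_rpow (ENNReal.ofReal_le_ofReal (h x)) hp

lemma meas_of_bounded (hball : ∀ (x : X) (r : ℝ), m (Metric.ball x r) < ∞)
    {B : Set X} (hB : Bornology.IsBounded B) : m B < ∞ := by
  rcases B.eq_empty_or_nonempty with rfl | ⟨x, hx⟩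
  · simp
  · obtain ⟨r, hr⟩ := hB.subset_closedBall x
    calc m B ≤ m (Metric.ball x (r + 1)) := by
          refine measure_mono (hr.trans ?_)
          exact Metric.closedBall_subset_ball (by linarith)
      _ < ∞ := hball x (r + 1)

lemma lpIntOn_const_lt_top (hp : 0 ≤ p) (hball : ∀ (x : X) (r : ℝ), m (Metric.ball x r) < ∞)
    (c : ℝ) {B : Set X} (hB : Bornology.IsBounded B) :
    lpIntOn m p (fun _ => c) B < ∞ := by
  unfold lpIntOn
  rw [MeasureTheory.setLIntegral_const]
  exact ENNReal.mul_lt_top (ENNReal.rpow_lt_top_of_nonneg hp ENNReal.ofReal_ne_top)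
    (meas_of_bounded hball hB)

lemma lploc_sub_const (hp : 0 ≤ p)
    (hball : ∀ (x : X) (r : ℝ), m (Metric.ball x r) < ∞)
    {u : X → ℝ} (hu : LpLocMem m p u) (c : ℝ) :
    LpLocMem m p (fun x => u x - c) := by
  refine ⟨hu.1.sub measurable_const, fun B hBm hBb => ?_⟩
  have key : ∀ x, ENNReal.ofReal |u x - c| ^ p ≤
      2 ^ p * (ENNReal.ofReal |u x| ^ p + ENNReal.ofReal |c| ^ p) := by
    intro x
    calc ENNReal.ofReal |u x - c| ^ p
        ≤ (ENNReal.ofReal |u x| + ENNReal.ofReal |c|) ^ p := by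
          apply ENNReal.rpow_le_rpow _ hp
          rw [← ENNReal.ofReal_add (abs_nonneg _) (abs_nonneg _)]
          exact ENNReal.ofReal_le_ofReal (abs_sub _ _)
      _ ≤ 2 ^ p * (ENNReal.ofReal |u x| ^ p + ENNReal.ofReal |c| ^ p) :=
          rpow_add_le_two_rpow _ _ hp
  calc lpIntOn m p (fun x => u x - c) B
      ≤ ∫⁻ x in B, 2 ^ p * (ENNReal.ofReal |u x| ^ p + ENNReal.ofReal |c| ^ p) ∂m :=
        MeasureTheory.lintegral_mono fun x => key x
    _ = 2 ^ p * (∫⁻ x in B, (ENNReal.ofReal |u x| ^ p + ENNReal.ofReal |c| ^ p) ∂m) :=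
        MeasureTheory.lintegral_const_mul' _ _ (by
          exact (ENNReal.rpow_lt_top_of_nonneg hp (by simp)).ne)
    _ = 2 ^ p * ((∫⁻ x in B, ENNReal.ofReal |u x| ^ p ∂m) +
          ∫⁻ x in B, ENNReal.ofReal |c| ^ p ∂m) := by
        rw [MeasureTheory.lintegral_add_right]
        exact measurable_const
    _ < ∞ := by
        refine ENNReal.mul_lt_top (ENNReal.rpow_lt_top_of_nonneg hp (by simp)) ?_
        refine ENNReal.add_lt_top.2 ⟨hu.2 B hBm hBb, ?_⟩
        exact lpIntOn_const_lt_top hp hball c hBb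

end Helpers

/-- Property L3 implies property L2. -/
theorem L3_implies_L2 {X : Type*} [MetricSpace X] [CompleteSpace X]
    [TopologicalSpace.SeparableSpace X] [MeasurableSpace X] [BorelSpace X]
    (m : MeasureTheory.Measure X) (hm : m ≠ 0)
    (hball : ∀ (x : X) (r : ℝ), m (Metric.ball x r) < ∞)
    (p : ℝ) (hp : 1 < p) (S : DStructure X m p)
    (hL3 : S.L3prop) : S.L2prop := by
  intro u hu B hB hconst g hg
  obtain ⟨c, hc⟩ := hconst
  obtain ⟨huLoc, huE⟩ := hu
  obtain ⟨hgD, hgLp, hgE⟩ := hg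
  have hp0 : (0:ℝ) < p := lt_trans one_pos hp
  have hgMeas : Measurable g := S.measurable_of_mem _ _ hgD
  have hgNN : 0 ≤ g := S.nonneg_of_mem _ _ hgD
  set v : X → ℝ := fun x => u x - c with hv_def
  have hvLoc : LpLocMem m p v := lploc_sub_const hp0.le hball huLoc c
  have hvMeas : Measurable v := hvLoc.1
  -- the zero function is a pseudo-gradient of the constant |c|
  have hcLoc : LpLocMem m p (fun _ => |c|) :=
    ⟨measurable_const, fun B hBm hBb => lpIntOn_const_lt_top hp0.le hball _ hBb⟩
  have h0D : ({x | 0 < |c|}.indicator (fun _ => ((0:ℝ≥0):ℝ))) ∈ S.D (fun _ => |c|) :=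
    S.axiomA1 (fun _ => |c|) 0 hcLoc (fun x => abs_nonneg c) (LipschitzWith.const |c|)
  have h0eq : ∀ x : X, ({x : X | 0 < |c|}.indicator (fun _ => ((0:ℝ≥0):ℝ))) x = 0 := by
    intro x; simp [Set.indicator]
  -- g is a pseudo-gradient of v = u - c
  have hgvD : g ∈ S.D v := by
    set s : ℝ := if 0 ≤ c then -1 else 1 with hs_def
    have hkey : (fun x => 1 * u x + s * ((fun _ => |c|) x)) = v := by
      funext x
      by_cases h : 0 ≤ c
      · simp [hs_def, h, abs_of_nonneg h, v, sub_eq_add_neg]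
      · simp [hs_def, h, abs_of_neg (lt_of_not_ge h), v, sub_eq_add_neg]
    have := S.axiomA2 u (fun _ => |c|) g _ g 1 s huLoc hcLoc hgD h0D hgMeas hgNN
      (Filter.Eventually.of_forall fun x => by
        rw [h0eq x]; simp)
    rwa [hkey] at this
  have hvS : v ∈ S.SobolevClass := by
    refine ⟨hvLoc, lt_of_le_of_lt ?_ (hgE ▸ huE)⟩
    exact iInf_le_of_le g (iInf_le_of_le hgvD le_rfl)
  -- g is a pseudo-gradient of -v
  have hnvLoc : LpLocMem m p (fun x => -(v x)) := by
    refine ⟨hvMeas.neg, fun B hBm hBb => ?_⟩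
    have : lpIntOn m p (fun x => -(v x)) B = lpIntOn m p v B := by
      unfold lpIntOn; simp only [abs_neg]
    rw [this]; exact hvLoc.2 B hBm hBb
  have hgnvD : g ∈ S.D (fun x => -(v x)) := by
    have hkey : (fun x => (-1) * v x + 0 * v x) = fun x => -(v x) := by
      funext x; ring
    have := S.axiomA2 v v g g g (-1) 0 hvLoc hvLoc hgvD hgvD hgMeas hgNN
      (Filter.Eventually.of_forall fun x => by simp)
    rwa [hkey] at this
  have hnvS : (fun x => -(v x)) ∈ S.SobolevClass := by
    refine ⟨hnvLoc, lt_of_le_of_lt ?_ (hgE ▸ huE)⟩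
    exact iInf_le_of_le g (iInf_le_of_le hgnvD le_rfl)
  -- apply L3 twice
  have h1 : {x | 0 < v x}.indicator g ∈ S.D (fun x => max (v x) 0) := hL3 v hvS g hgvD
  have h2 : {x | 0 < -(v x)}.indicator g ∈ S.D (fun x => max (-(v x)) 0) :=
    hL3 _ hnvS g hgnvD
  set h : X → ℝ := fun x => {x | 0 < v x}.indicator g x + {x | 0 < -(v x)}.indicator g x
    with hh_def
  have hS1 : MeasurableSet {x | 0 < v x} := measurableSet_lt measurable_const hvMeas
  have hS2 : MeasurableSet {x | 0 < -(v x)} := measurableSet_lt measurable_const hvMeas.neg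
  have hhMeas : Measurable h :=
    (hgMeas.indicator hS1).add (hgMeas.indicator hS2)
  have hhNN : 0 ≤ h := fun x =>
    add_nonneg (Set.indicator_nonneg (fun y _ => hgNN y) x)
      (Set.indicator_nonneg (fun y _ => hgNN y) x)
  have hmaxLoc : LpLocMem m p (fun x => max (v x) 0) := by
    refine ⟨hvMeas.max measurable_const, fun B hBm hBb => ?_⟩
    refine lt_of_le_of_lt (lpIntOn_mono_fun hp0.le (fun x => ?_) B) (hvLoc.2 B hBm hBb)
    rw [abs_of_nonneg (le_max_right _ _)]
    exact max_le (le_abs_self _) (abs_nonneg _)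
  have hmaxnLoc : LpLocMem m p (fun x => max (-(v x)) 0) := by
    refine ⟨hvMeas.neg.max measurable_const, fun B hBm hBb => ?_⟩
    refine lt_of_le_of_lt (lpIntOn_mono_fun hp0.le (fun x => ?_) B) (hvLoc.2 B hBm hBb)
    rw [abs_of_nonneg (le_max_right _ _)]
    exact max_le ((neg_le_abs _).trans (le_of_eq rfl)) (abs_nonneg _)
  -- h is a pseudo-gradient of v
  have hhvD : h ∈ S.D v := by
    have hkey : (fun x => 1 * max (v x) 0 + (-1) * max (-(v x)) 0) = v := by
      funext x
      have := max_zero_sub_max_neg_zero_eq_self (v x)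
      linarith [this]
    have := S.axiomA2 (fun x => max (v x) 0) (fun x => max (-(v x)) 0) _ _ h 1 (-1)
      hmaxLoc hmaxnLoc h1 h2 hhMeas hhNN
      (Filter.Eventually.of_forall fun x => by simp [hh_def])
    rwa [hkey] at this
  -- h is a pseudo-gradient of u
  have hhuD : h ∈ S.D u := by
    set s : ℝ := if 0 ≤ c then 1 else -1 with hs_def
    have hkey : (fun x => 1 * v x + s * ((fun _ => |c|) x)) = u := by
      funext x
      by_cases hcs : 0 ≤ c
      · simp only [hs_def, if_pos hcs, abs_of_nonneg hcs, one_mul, hv_def]; ring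
      · simp only [hs_def, if_neg hcs, abs_of_neg (lt_of_not_ge hcs), one_mul, hv_def]; ring
    have := S.axiomA2 v (fun _ => |c|) h _ h 1 s hvLoc hcLoc hhvD h0D hhMeas hhNN
      (Filter.Eventually.of_forall fun x => by rw [h0eq x]; simp)
    rwa [hkey] at this
  -- minimality: ∫ g^p ≤ ∫ h^p
  have hEle : lpIntOn m p g Set.univ ≤ lpIntOn m p h Set.univ := by
    rw [hgE]
    exact iInf_le_of_le h (iInf_le_of_le hhuD le_rfl)
  -- h vanishes a.e. on B
  have hhB0 : lpIntOn m p h B = 0 := by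
    have : ∀ᵐ x ∂(m.restrict B), ENNReal.ofReal |h x| ^ p = 0 := by
      filter_upwards [hc] with x hx
      have hvx : v x = 0 := by simp [hv_def, hx]
      have : h x = 0 := by
        simp [hh_def, Set.indicator, hvx]
      rw [this]
      simp [ENNReal.zero_rpow_of_pos hp0]
    calc lpIntOn m p h B = ∫⁻ x in B, 0 ∂m := MeasureTheory.lintegral_congr_ae this
      _ = 0 := MeasureTheory.lintegral_zero
  -- h ≤ g pointwise
  have hhle : ∀ x, |h x| ≤ |g x| := by
    intro x
    rw [abs_of_nonneg (hhNN x), abs_of_nonneg (hgNN x)]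
    simp only [hh_def, Set.indicator_apply, Set.mem_setOf_eq]
    split_ifs <;> first | linarith | simpa using hgNN x
  -- split the integrals over B and Bᶜ
  have hsplit : ∀ f : X → ℝ, lpIntOn m p f Set.univ = lpIntOn m p f B + lpIntOn m p f Bᶜ := by
    intro f
    unfold lpIntOn
    rw [MeasureTheory.Measure.restrict_univ, ← MeasureTheory.lintegral_add_compl _ hB]
  have hgBc_fin : lpIntOn m p g Bᶜ ≠ ∞ := by
    refine ne_of_lt (lt_of_le_of_lt ?_ hgLp.2)
    unfold lpIntOn
    rw [MeasureTheory.Measure.restrict_univ]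
    exact MeasureTheory.setLIntegral_le_lintegral _ _
  have hgB0 : lpIntOn m p g B = 0 := by
    have hmain : lpIntOn m p g B + lpIntOn m p g Bᶜ ≤ 0 + lpIntOn m p g Bᶜ := by
      calc lpIntOn m p g B + lpIntOn m p g Bᶜ = lpIntOn m p g Set.univ := (hsplit g).symm
        _ ≤ lpIntOn m p h Set.univ := hEle
        _ = lpIntOn m p h B + lpIntOn m p h Bᶜ := hsplit h
        _ = 0 + lpIntOn m p h Bᶜ := by rw [hhB0]
        _ ≤ 0 + lpIntOn m p g Bᶜ := by
            gcongr
            exact lpIntOn_mono_fun hp0.le hhle Bᶜ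
    have := (ENNReal.add_le_add_iff_right hgBc_fin).1 hmain
    exact le_antisymm this zero_le
  -- conclude g = 0 a.e. on B
  have hInt0 : ∀ᵐ x ∂(m.restrict B), ENNReal.ofReal |g x| ^ p = 0 := by
    have hmeas : Measurable fun x => ENNReal.ofReal |g x| ^ p :=
      (ENNReal.measurable_ofReal.comp hgMeas.abs).pow_const p
    exact (MeasureTheory.lintegral_eq_zero_iff hmeas).1 hgB0
  filter_upwards [hInt0] with x hx
  rw [ENNReal.rpow_eq_zero_iff] at hx
  rcases hx with ⟨hx0, _⟩ | ⟨hxT, _⟩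
  · have : |g x| ≤ 0 := by
      rwa [ENNReal.ofReal_eq_zero] at hx0
    exact abs_nonpos_iff.1 this
  · exact absurd hxT ENNReal.ofReal_ne_top
end
end

section
/- Let (X,d,m) be a metric measure space, p ∈ (1,∞), and let D be a D-structure on (X,d,m) satisfying property L4. Then D satisfies property L5; that is, for every u ∈ S^p(X) and every g ∈ D[u], the inequality Du ≤ g holds m-a.e. on X. -/
open Filter Set
open scoped ENNReal NNReal Topology

noncomputable section

open AxSob AxSob.DStructure

/-- Property L4 implies property L5. -/
theorem L4_implies_L5 {X : Type*} [MetricSpace X] [CompleteSpace X]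
    [TopologicalSpace.SeparableSpace X] [MeasurableSpace X] [BorelSpace X]
    (m : MeasureTheory.Measure X) (hm : m ≠ 0)
    (hball : ∀ (x : X) (r : ℝ), m (Metric.ball x r) < ∞)
    (p : ℝ) (hp : 1 < p) (S : DStructure X m p)
    (hL4 : S.L4prop) : S.L5prop := by
  intro u hu g hg h hh
  obtain ⟨hgD, hgLp, hgE⟩ := hg
  set k : X → ℝ := fun x => min (g x) (h x) with hk
  have hgm := S.measurable_of_mem u g hgD
  have hhm := S.measurable_of_mem u h hh
  have hgnn := S.nonneg_of_mem u g hgD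
  have hhnn := S.nonneg_of_mem u h hh
  have hkD : k ∈ S.D u := hL4 u hu g hgD h hh
  have hp0 : (0:ℝ) < p := lt_trans zero_lt_one hp
  have hle : ∀ x, ENNReal.ofReal |k x| ^ p ≤ ENNReal.ofReal |g x| ^ p := by
    intro x
    refine ENNReal.rpow_le_rpow (ENNReal.ofReal_le_ofReal ?_) hp0.le
    rw [abs_of_nonneg (le_min (hgnn x) (hhnn x)), abs_of_nonneg (hgnn x)]
    exact min_le_left _ _
  have hIle : lpIntOn m p k Set.univ ≤ lpIntOn m p g Set.univ :=
    MeasureTheory.lintegral_mono fun x => hle x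
  have hEle : S.energy u ≤ lpIntOn m p k Set.univ := iInf₂_le k hkD
  have hEq : lpIntOn m p k Set.univ = lpIntOn m p g Set.univ :=
    le_antisymm hIle (hgE ▸ hEle)
  have hfin : lpIntOn m p g Set.univ < ∞ := hgLp.2
  have hkmble : Measurable fun x => ENNReal.ofReal |k x| ^ p :=
    ((hgm.min hhm).abs.ennreal_ofReal).pow_const p
  have hgmble : Measurable fun x => ENNReal.ofReal |g x| ^ p :=
    (hgm.abs.ennreal_ofReal).pow_const p
  have hkfin : lpIntOn m p k Set.univ ≠ ∞ := by rw [hEq]; exact hfin.ne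
  have hsub : ∫⁻ x in Set.univ, (ENNReal.ofReal |g x| ^ p - ENNReal.ofReal |k x| ^ p) ∂m
      = 0 := by
    rw [MeasureTheory.lintegral_sub hkmble hkfin
      (Filter.Eventually.of_forall fun x => hle x)]
    exact tsub_eq_zero_of_le hEq.ge
  rw [MeasureTheory.Measure.restrict_univ] at hsub
  have hae : ∀ᵐ x ∂m, ENNReal.ofReal |g x| ^ p - ENNReal.ofReal |k x| ^ p = 0 :=
    (MeasureTheory.lintegral_eq_zero_iff (hgmble.sub hkmble)).mp hsub
  filter_upwards [hae] with x hx
  have hxe : ENNReal.ofReal |g x| ^ p = ENNReal.ofReal |k x| ^ p :=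
    le_antisymm (tsub_eq_zero_iff_le.mp hx) (hle x)
  have : ENNReal.ofReal |g x| = ENNReal.ofReal |k x| :=
    ENNReal.rpow_left_injective hp0.ne' hxe
  have hgk : |g x| = |k x| :=
    (ENNReal.ofReal_eq_ofReal_iff (abs_nonneg _) (abs_nonneg _)).mp this
  rw [abs_of_nonneg (hgnn x), abs_of_nonneg (le_min (hgnn x) (hhnn x))] at hgk
  rw [hgk]
  exact min_le_right _ _
end
end
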